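/- arXiv:1208.6332 — 5 statements merged into one kernel-verified Lean document; each statement's English description precedes it below -/
import Mathlib

section
/- Define h : ℕ → ℕ by h(j) = j − ⌊j/4⌋ − 1 if j ≡ 3 (mod 4) and h(j) = j − ⌊j/4⌋ otherwise. Suppose a_AB, a_B, a_BA, a_A are functions from {j ∈ ℕ : j ≥ 3} to ℕ satisfying a_AB(3) = a_B(3) = a_BA(3) = a_A(3) = 2 and, for all j ≥ 3: a_AB(j+1) = a_A(j) + 1, a_B(j+1) = a_AB(j) + 1, a_BA(j+1) = a_B(j) + 1, and a_A(j+1) = max(a_B(j), a_BA(j)). Then for all j ≥ 3 one has a_BA(j) = h(j), a_B(j) = h(j+1) − 1, a_AB(j) = h(j+2) − 2, a_A(j) = h(j+3) − 3; consequently max(a_AB(j), a_B(j), a_BA(j), a_A(j)) = h(j) for all j ≥ 3. -/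
/-- The degree bound `h(j)`: `h(j) = j - ⌊j/4⌋ - 1` if `j ≡ 3 (mod 4)`,
and `h(j) = j - ⌊j/4⌋` otherwise. -/
def hdeg (j : ℕ) : ℕ := if j % 4 = 3 then j - j / 4 - 1 else j - j / 4

lemma hdeg_ineq (j : ℕ) (hj : 3 ≤ j) :
    hdeg (j + 1) - 1 ≤ hdeg j ∧ hdeg (j + 2) - 2 ≤ hdeg j ∧
    hdeg (j + 3) - 3 ≤ hdeg j := by
  simp only [hdeg]
  split_ifs <;> omega

lemma hdeg_step (j : ℕ) (hj : 3 ≤ j) :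
    hdeg (j + 1) = hdeg j + (hdeg (j + 1) - hdeg j) ∧ hdeg (j + 1) - hdeg j ≤ 1 ∧
    hdeg j ≥ 2 := by
  simp only [hdeg]
  split_ifs <;> omega

/-- Lemma 1.2(a) of the paper (combinatorial core): the recursively defined
maximal degrees `a_{AB}, a_B, a_{BA}, a_A` satisfy the stated closed formulas,
and their maximum equals `h(j)` for every `j ≥ 3`. -/
theorem stmt_0 (aAB aB aBA aA : ℕ → ℕ)
    (hAB3 : aAB 3 = 2) (hB3 : aB 3 = 2) (hBA3 : aBA 3 = 2) (hA3 : aA 3 = 2)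
    (hAB : ∀ j, 3 ≤ j → aAB (j + 1) = aA j + 1)
    (hB : ∀ j, 3 ≤ j → aB (j + 1) = aAB j + 1)
    (hBA : ∀ j, 3 ≤ j → aBA (j + 1) = aB j + 1)
    (hA : ∀ j, 3 ≤ j → aA (j + 1) = max (aB j) (aBA j)) :
    ∀ j, 3 ≤ j →
      aBA j = hdeg j ∧
      aB j = hdeg (j + 1) - 1 ∧
      aAB j = hdeg (j + 2) - 2 ∧
      aA j = hdeg (j + 3) - 3 ∧
      max (max (aAB j) (aB j)) (max (aBA j) (aA j)) = hdeg j := by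
  have key : ∀ j, 3 ≤ j →
      aBA j = hdeg j ∧ aB j = hdeg (j + 1) - 1 ∧
      aAB j = hdeg (j + 2) - 2 ∧ aA j = hdeg (j + 3) - 3 := by
    intro j hj
    induction j, hj using Nat.le_induction with
    | base => refine ⟨?_, ?_, ?_, ?_⟩ <;> simp [hAB3, hB3, hBA3, hA3, hdeg]
    | succ n hn ih =>
      obtain ⟨h1, h2, h3, h4⟩ := ih
      rw [hBA n hn, hB n hn, hAB n hn, hA n hn, h1, h2, h3, h4]
      refine ⟨?_, ?_, ?_, ?_⟩ <;> · simp only [hdeg, Nat.max_def]; split_ifs <;> omega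
  intro j hj
  obtain ⟨h1, h2, h3, h4⟩ := key j hj
  refine ⟨h1, h2, h3, h4, ?_⟩
  obtain ⟨i1, i2, i3⟩ := hdeg_ineq j hj
  rw [h1, h2, h3, h4, Nat.max_def, Nat.max_def, Nat.max_def]
  split_ifs <;> omega
end

section
/- Let k be a field and let 1 ≤ n < g be integers. Then HH^i(E_{g,n})_{2−i} ≠ 0 for every i ≥ 5. -/
noncomputable section

/-- Basis elements of the algebra `E_{g,n}`: the idempotents `e_0, …, e_n`
(`e 0` corresponding to the structure sheaf), and the elements
`A_i, B_i, Y_i` (`1 ≤ i ≤ n`) and `X_j` (`1 ≤ j ≤ g`). -/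
inductive EB (g n : ℕ) : Type
  | e : Fin (n + 1) → EB g n
  | A : Fin n → EB g n
  | B : Fin n → EB g n
  | Y : Fin n → EB g n
  | X : Fin g → EB g n
  deriving DecidableEq, Fintype

namespace EB

variable {g n : ℕ}

/-- The idempotent acting as the identity on the left of a basis element. -/
def left : EB g n → Fin (n + 1)
  | e i => i
  | A i => i.succ
  | B _ => 0
  | Y i => i.succ
  | X _ => 0

/-- The idempotent acting as the identity on the right of a basis element. -/
def right : EB g n → Fin (n + 1)
  | e i => i
  | A _ => 0
  | B i => i.succ
  | Y i => i.succ
  | X _ => 0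

/-- The (internal) degree of a basis element: `A_i` and the idempotents have
degree `0`; `B_i`, `Y_i`, `X_j` have degree `1`. -/
def deg : EB g n → ℕ
  | e _ => 0
  | A _ => 0
  | B _ => 1
  | Y _ => 1
  | X _ => 1

/-- The multiplication table of `E_{g,n}` on basis elements: `none` encodes the
product `0`.  The only nontrivial products besides those involving idempotents
are `A_i B_i = Y_i` and `B_i A_i = X_i`. -/
def mul (hng : n ≤ g) : EB g n → EB g n → Option (EB g n)
  | e i, v => if left v = i then some v else none
  | u, e i => if right u = i then some u else none
  | A i, B j => if i = j then some (Y i) else none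
  | B i, A j => if i = j then some (X (Fin.castLE hng i)) else none
  | _, _ => none

end EB

variable (k : Type*) [Field k]

/-- Hochschild `i`-cochains on `E_{g,n}` with values in `E_{g,n}`, recorded in
coordinates with respect to the basis: `c w u` is the coefficient of the basis
element `u` in the value of the multilinear map `c` on the tuple `w` of basis
elements. -/
abbrev HCochain (g n i : ℕ) := (Fin i → EB g n) → EB g n → k

/-- A Hochschild cochain is homogeneous of internal degree `j` if its value on a
tuple of basis elements of total degree `d` lies in the component of degree `d + j`. -/
def IsHomog {g n : ℕ} (i : ℕ) (j : ℤ) (c : HCochain k g n i) : Prop :=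
  ∀ w u, c w u ≠ 0 → (EB.deg u : ℤ) = (∑ m : Fin i, (EB.deg (w m) : ℤ)) + j

/-- The Hochschild differential
`δf(a_1,…,a_{i+1}) = a_1 f(a_2,…,a_{i+1}) + ∑ₘ (-1)ᵐ f(a_1,…,a_m a_{m+1},…,a_{i+1})
 + (-1)^{i+1} f(a_1,…,a_i) a_{i+1}`, written in coordinates. -/
def hdelta {g n : ℕ} (hng : n ≤ g) (i : ℕ) (c : HCochain k g n i) :
    HCochain k g n (i + 1) := fun w u =>
  (∑ v : EB g n, if EB.mul hng (w 0) v = some u then c (fun m => w m.succ) v else 0)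
  + (∑ m : Fin i, (-1 : k) ^ ((m : ℕ) + 1) *
      ((EB.mul hng (w m.castSucc) (w m.succ)).elim 0 (fun v =>
        c (fun l => if (l : ℕ) < (m : ℕ) then w l.castSucc
          else if (l : ℕ) = (m : ℕ) then v else w l.succ) u)))
  + (-1 : k) ^ (i + 1) *
      (∑ v : EB g n, if EB.mul hng v (w (Fin.last i)) = some u then c (fun m => w m.castSucc) v else 0)


namespace HHW
open EB

variable {g n : ℕ}

section Defs
variable (hn : 0 < n) (hng : n ≤ g)

def bb : EB g n := .B ⟨0, hn⟩
def aa : EB g n := .A ⟨0, hn⟩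
def yy : EB g n := .Y ⟨0, hn⟩
def x0 : EB g n := .X (Fin.castLE hng ⟨0, hn⟩)
def xt : EB g n := .X ⟨g - 1, by omega⟩

/-- the tuple `τ¹ = (B, A, X₀, T, T, …)`. -/
def t1 : ℕ → EB g n
  | 0 => bb hn
  | 1 => aa hn
  | 2 => x0 hn hng
  | _ => xt hn hng

/-- the chain tuples `(T^p, B, Y, A, T, …)`; `ch 0 = τ² = (B, Y, A, T, …)`. -/
def ch (p l : ℕ) : EB g n :=
  if l = p then bb hn else if l = p + 1 then yy hn else if l = p + 2 then aa hn
  else xt hn hng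

/-- the tuple `(B, A, B, A, T, T, …)`. -/
def tw : ℕ → EB g n
  | 0 => bb hn
  | 1 => aa hn
  | 2 => bb hn
  | 3 => aa hn
  | _ => xt hn hng

end Defs

/-- replace the `q`-th entry of `τ` by the pair `(a, b)`. -/
def rep (τ : ℕ → EB g n) (q : ℕ) (a b : EB g n) : ℕ → EB g n := fun l =>
  if l < q then τ l else if l = q then a else if l = q + 1 then b else τ (l - 1)

/-- insert `e_(left τ_q)` at slot `q` of `τ`. -/
def ti (τ : ℕ → EB g n) (q : ℕ) : ℕ → EB g n := fun l =>
  if l < q then τ l else if l = q then .e (EB.left (τ q)) else τ (l - 1)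

section Lemmas
variable (hn : 0 < n) (hng : n ≤ g)

lemma ch_eq0 (p : ℕ) : ch hn hng p p = bb hn := by simp [ch]
lemma ch_eq1 (p : ℕ) : ch hn hng p (p+1) = yy hn := by
  unfold ch; rw [if_neg (by omega), if_pos rfl]
lemma ch_eq2 (p : ℕ) : ch hn hng p (p+2) = aa hn := by
  unfold ch; rw [if_neg (by omega), if_neg (by omega), if_pos rfl]
lemma ch_out {p l : ℕ} (h : l ≠ p ∧ l ≠ p+1 ∧ l ≠ p+2) : ch hn hng p l = xt hn hng := by
  unfold ch; rw [if_neg h.1, if_neg h.2.1, if_neg h.2.2]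

lemma ti_lt {q l : ℕ} (τ : ℕ → EB g n) (h : l < q) : ti τ q l = τ l := if_pos h
lemma ti_eq (τ : ℕ → EB g n) (q : ℕ) : ti τ q q = .e (EB.left (τ q)) := by
  unfold ti; rw [if_neg (lt_irrefl q), if_pos rfl]
lemma ti_gt {q l : ℕ} (τ : ℕ → EB g n) (h : q < l) : ti τ q l = τ (l - 1) := by
  unfold ti; rw [if_neg (by omega), if_neg (by omega)]

-- multiplication facts
lemma mul_e_self (x : EB g n) : EB.mul hng (.e (EB.left x)) x = some x := by
  cases x <;> simp [EB.mul, EB.left]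

lemma mul_self_e (x : EB g n) : EB.mul hng x (.e (EB.right x)) = some x := by
  cases x <;> simp [EB.mul, EB.left, EB.right]

lemma mul_aa_bb : EB.mul hng (aa hn) (bb hn) = some (yy hn) := by
  simp [EB.mul, aa, bb, yy]

lemma mul_bb_aa : EB.mul hng (bb hn) (aa hn) = some (x0 hn hng) := by
  simp [EB.mul, bb, aa, x0]

lemma mul_fact {a b x : EB g n} (h : EB.mul hng a b = some x) :
    (a = .e (EB.left x) ∧ b = x) ∨ (a = x ∧ b = .e (EB.right x)) ∨
    (∃ i, a = .A i ∧ b = .B i ∧ x = .Y i) ∨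
    (∃ i, a = .B i ∧ b = .A i ∧ x = .X (Fin.castLE hng i)) := by
  cases a <;> cases b <;> simp_all [EB.mul, EB.left, EB.right, Option.ite_none_right_eq_some, Option.some.injEq] <;> grind

lemma mul_xt_right_iff {a u : EB g n} :
    EB.mul hng a (xt hn hng) = some u ↔ a = .e 0 ∧ u = xt hn hng := by
  cases a <;> simp_all [EB.mul, EB.left, EB.right, xt] <;> grind

lemma mul_xt_left_iff {a u : EB g n} :
    EB.mul hng (xt hn hng) a = some u ↔ a = .e 0 ∧ u = xt hn hng := by
  cases a <;> simp_all [EB.mul, EB.left, EB.right, xt] <;> grind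

lemma mul_bb_ne_xt (hlt : n < g) (v : EB g n) :
    EB.mul hng (bb hn) v ≠ some (xt hn hng) := by
  cases v <;> simp_all [EB.mul, EB.left, EB.right, xt, bb] <;> intro h <;>
    simp_all [Fin.ext_iff] <;> omega

lemma mul_aa_right_ne_xt (hlt : n < g) (v : EB g n) :
    EB.mul hng v (aa hn) ≠ some (xt hn hng) := by
  cases v <;> simp_all [EB.mul, EB.left, EB.right, xt, aa] <;> intro h <;>
    simp_all [Fin.ext_iff] <;> omega

end Lemmas

section Lemmas2
variable (hn : 0 < n) (hng : n ≤ g)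

lemma comp_t1 (l : ℕ) : EB.right (t1 hn hng l) = EB.left (t1 hn hng (l+1)) := by
  rcases l with _|_|_|l <;> simp [t1, bb, aa, x0, xt, EB.left, EB.right]

lemma comp_ch0 (l : ℕ) : EB.right (ch hn hng 0 l) = EB.left (ch hn hng 0 (l+1)) := by
  rcases l with _|_|_|l <;>
    simp [ch, bb, yy, aa, xt, EB.left, EB.right]

lemma t1_ne_e (l : ℕ) (i : Fin (n+1)) : t1 hn hng l ≠ .e i := by
  rcases l with _|_|_|l <;> simp [t1, bb, aa, x0, xt]

lemma ch0_ne_e (l : ℕ) (i : Fin (n+1)) : ch hn hng 0 l ≠ .e i := by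
  rcases l with _|_|_|l <;> simp [ch, bb, yy, aa, xt]

lemma tw_ne_e (l : ℕ) (i : Fin (n+1)) : tw hn hng l ≠ .e i := by
  rcases l with _|_|_|_|l <;> simp [tw, bb, aa, xt]

lemma t1_ne_Y (l : ℕ) (i : Fin n) : t1 hn hng l ≠ .Y i := by
  rcases l with _|_|_|l <;> simp [t1, bb, aa, x0, xt]

lemma ch0_eq_Y {l : ℕ} {i : Fin n} (h : ch hn hng 0 l = .Y i) :
    l = 1 ∧ i = ⟨0, hn⟩ := by
  rcases l with _|_|_|l <;> simp_all [ch, bb, yy, aa, xt] <;> simp_all [Fin.ext_iff] <;> omega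

lemma t1_eq_X (hlt : n < g) {l : ℕ} {i : Fin n}
    (h : t1 hn hng l = .X (Fin.castLE hng i)) : l = 2 ∧ i = ⟨0, hn⟩ := by
  rcases l with _|_|_|l <;> simp_all [t1, bb, aa, x0, xt] <;> simp_all [Fin.ext_iff] <;> omega

lemma ch0_ne_X (hlt : n < g) (l : ℕ) (i : Fin n) :
    ch hn hng 0 l ≠ .X (Fin.castLE hng i) := by
  rcases l with _|_|_|l <;> simp [ch, bb, yy, aa, xt] <;> simp [Fin.ext_iff] <;> omega

lemma rep_left (τ : ℕ → EB g n) (q : ℕ) :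
    rep τ q (.e (EB.left (τ q))) (τ q) = ti τ q := by
  funext l; unfold rep ti
  split_ifs <;> first | rfl | omega | (congr 1 <;> omega)

lemma rep_right (τ : ℕ → EB g n) (hcomp : ∀ l, EB.right (τ l) = EB.left (τ (l+1)))
    (q : ℕ) : rep τ q (τ q) (.e (EB.right (τ q))) = ti τ (q+1) := by
  funext l; unfold rep ti
  split_ifs <;> first | rfl | omega | (congr 1 <;> omega) | (rw [hcomp q]) | (rw [hcomp q]; congr 1 <;> congr 1 <;> omega)

lemma rep_t1_tw : rep (t1 hn hng) 2 (bb hn) (aa hn) = tw hn hng := by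
  funext l; unfold rep
  rcases l with _|_|_|_|l <;> first | rfl | (split_ifs <;> first | rfl | omega)

lemma rep_ch0_tw : rep (ch hn hng 0) 1 (aa hn) (bb hn) = tw hn hng := by
  funext l; unfold rep
  split_ifs with h1 h2 h3
  · have h0 : l = 0 := by omega
    subst h0; rfl
  · subst h2; rfl
  · subst h3; rfl
  · rcases l with _|_|_|_|l
    · omega
    · omega
    · omega
    · rfl
    · show ch hn hng 0 (l+4-1) = tw hn hng (l+4)
      have h4 : l + 4 - 1 = l + 3 := by omega
      rw [h4, ch_out hn hng (by omega)]; rfl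

end Lemmas2
section Main
variable {g n : ℕ} (hn : 0 < n) (hng : n ≤ g)

/-- The cocycle: indicator of the two points `((B,A,X₀,T,…,T), T)` and
`((B,Y,A,T,…,T), T)`. -/
def cc (k : Type*) [Field k] (m : ℕ) : HCochain k g n (m+1) := fun w u =>
  (if (∀ l : Fin (m+1), w l = t1 hn hng l.val) ∧ u = xt hn hng then (1:k) else 0)
  + (if (∀ l : Fin (m+1), w l = ch hn hng 0 l.val) ∧ u = xt hn hng then (1:k) else 0)

def GG (k : Type*) [Field k] (m : ℕ) (w : Fin (m+2) → EB g n) (u : EB g n) (q : ℕ) : k :=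
  (-1:k)^q *
  ((if (∀ l : Fin (m+2), w l = ti (t1 hn hng) q l.val) ∧ u = xt hn hng then (1:k) else 0)
  + (if (∀ l : Fin (m+2), w l = ti (ch hn hng 0) q l.val) ∧ u = xt hn hng then (1:k) else 0))

lemma coll_iff_rep (τ : ℕ → EB g n) {m : ℕ} (w : Fin (m+2) → EB g n)
    (mm : Fin (m+1)) (v : EB g n) :
    (∀ l : Fin (m+1), (if (l:ℕ) < (mm:ℕ) then w l.castSucc
        else if (l:ℕ) = (mm:ℕ) then v else w l.succ) = τ (l:ℕ))
    ↔ (v = τ (mm:ℕ) ∧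
        ∀ l : Fin (m+2), w l = rep τ (mm:ℕ) (w mm.castSucc) (w mm.succ) l.val) := by
  constructor
  · intro h
    have hv : v = τ (mm:ℕ) := by
      have := h mm
      rwa [if_neg (lt_irrefl _), if_pos rfl] at this
    refine ⟨hv, fun l => ?_⟩
    unfold rep
    rcases lt_trichotomy (l:ℕ) (mm:ℕ) with hl | hl | hl
    · rw [if_pos hl]
      have hmle : (mm:ℕ) ≤ m := by omega
      have := h ⟨(l:ℕ), by omega⟩
      rw [if_pos (by simpa using hl)] at this
      have hc : (⟨(l:ℕ), by omega⟩ : Fin (m+1)).castSucc = l := Fin.ext (by simp)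
      rwa [hc] at this
    · rw [if_neg (by omega), if_pos hl]
      congr 1
      exact Fin.ext (by simpa using hl)
    · rw [if_neg (by omega), if_neg (by omega)]
      rcases Nat.eq_or_lt_of_le hl with hl' | hl'
      · rw [if_pos hl'.symm]
        congr 1
        exact Fin.ext (by simp [← hl'])
      · rw [if_neg (by omega)]
        have := h ⟨(l:ℕ) - 1, by omega⟩
        rw [if_neg (by simp; omega), if_neg (by simp; omega)] at this
        have hc : (⟨(l:ℕ) - 1, by omega⟩ : Fin (m+1)).succ = l := Fin.ext (by simp; omega)
        rwa [hc] at this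
  · rintro ⟨hv, h⟩ l
    by_cases h1 : (l:ℕ) < (mm:ℕ)
    · rw [if_pos h1]
      have := h l.castSucc
      unfold rep at this
      rw [if_pos (by simpa using h1)] at this
      simpa using this
    · by_cases h2 : (l:ℕ) = (mm:ℕ)
      · rw [if_neg h1, if_pos h2, hv, h2]
      · rw [if_neg h1, if_neg h2]
        have := h l.succ
        unfold rep at this
        rw [if_neg (by simp; omega), if_neg (by simp; omega), if_neg (by simp; omega)] at this
        simpa using this

end Main
section Char
variable {g n : ℕ} (hn : 0 < n) (hng : n ≤ g)

lemma coll_t1_iff (hlt : n < g) {m : ℕ} (w : Fin (m+2) → EB g n)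
    (mm : Fin (m+1)) (v : EB g n)
    (hv : EB.mul hng (w mm.castSucc) (w mm.succ) = some v) :
    (∀ l : Fin (m+1), (if (l:ℕ) < (mm:ℕ) then w l.castSucc
        else if (l:ℕ) = (mm:ℕ) then v else w l.succ) = t1 hn hng (l:ℕ))
    ↔ ((∀ l : Fin (m+2), w l = ti (t1 hn hng) (mm:ℕ) l.val)
      ∨ (∀ l : Fin (m+2), w l = ti (t1 hn hng) ((mm:ℕ)+1) l.val)
      ∨ ((mm:ℕ) = 2 ∧ ∀ l : Fin (m+2), w l = tw hn hng l.val)) := by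
  rw [coll_iff_rep]
  constructor
  · rintro ⟨hv', hw⟩
    have hfact := mul_fact hng (hv' ▸ hv)
    rcases hfact with ⟨ha, hb⟩ | ⟨ha, hb⟩ | ⟨i, ha, hb, hx⟩ | ⟨i, ha, hb, hx⟩
    · left; intro l
      rw [hw l]; rw [ha, hb, rep_left]
    · right; left; intro l
      rw [hw l]; rw [ha, hb, rep_right _ (comp_t1 hn hng)]
    · exact absurd hx (t1_ne_Y hn hng _ _)
    · rcases t1_eq_X hn hng hlt hx with ⟨h2, hi⟩
      subst hi
      right; right
      refine ⟨h2, fun l => ?_⟩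
      rw [hw l, ha, hb, h2]
      rw [show EB.B (⟨0, hn⟩ : Fin n) = bb hn from rfl,
        show EB.A (⟨0, hn⟩ : Fin n) = aa hn from rfl, rep_t1_tw]
  · rintro (h | h | ⟨h2, h⟩)
    · have ha : w mm.castSucc = .e (EB.left (t1 hn hng (mm:ℕ))) := by
        have := h mm.castSucc
        rwa [Fin.coe_castSucc, ti_eq] at this
      have hb : w mm.succ = t1 hn hng (mm:ℕ) := by
        have := h mm.succ
        rw [Fin.val_succ, ti_gt _ (by omega)] at this
        simpa using this
      have : some v = some (t1 hn hng (mm:ℕ)) := by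
        rw [← hv, ha, hb, mul_e_self]
      refine ⟨Option.some.inj this, fun l => ?_⟩
      rw [ha, hb, rep_left]; exact h l
    · have ha : w mm.castSucc = t1 hn hng (mm:ℕ) := by
        have := h mm.castSucc
        rwa [Fin.coe_castSucc, ti_lt _ (by omega)] at this
      have hb : w mm.succ = .e (EB.right (t1 hn hng (mm:ℕ))) := by
        have := h mm.succ
        rw [Fin.val_succ, ti_eq, ← comp_t1 hn hng] at this
        exact this
      have : some v = some (t1 hn hng (mm:ℕ)) := by
        rw [← hv, ha, hb, mul_self_e]
      refine ⟨Option.some.inj this, fun l => ?_⟩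
      rw [ha, hb, rep_right _ (comp_t1 hn hng)]; exact h l
    · have ha : w mm.castSucc = bb hn := by
        have := h mm.castSucc; rw [Fin.coe_castSucc, h2] at this; exact this
      have hb : w mm.succ = aa hn := by
        have := h mm.succ; rw [Fin.val_succ, h2] at this; exact this
      have : some v = some (x0 hn hng) := by rw [← hv, ha, hb, mul_bb_aa]
      have hvx : v = x0 hn hng := Option.some.inj this
      refine ⟨by rw [hvx, h2]; rfl, fun l => ?_⟩
      rw [ha, hb, h2, rep_t1_tw]; exact h l

lemma coll_ch0_iff (hlt : n < g) {m : ℕ} (w : Fin (m+2) → EB g n)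
    (mm : Fin (m+1)) (v : EB g n)
    (hv : EB.mul hng (w mm.castSucc) (w mm.succ) = some v) :
    (∀ l : Fin (m+1), (if (l:ℕ) < (mm:ℕ) then w l.castSucc
        else if (l:ℕ) = (mm:ℕ) then v else w l.succ) = ch hn hng 0 (l:ℕ))
    ↔ ((∀ l : Fin (m+2), w l = ti (ch hn hng 0) (mm:ℕ) l.val)
      ∨ (∀ l : Fin (m+2), w l = ti (ch hn hng 0) ((mm:ℕ)+1) l.val)
      ∨ ((mm:ℕ) = 1 ∧ ∀ l : Fin (m+2), w l = tw hn hng l.val)) := by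
  rw [coll_iff_rep]
  constructor
  · rintro ⟨hv', hw⟩
    have hfact := mul_fact hng (hv' ▸ hv)
    rcases hfact with ⟨ha, hb⟩ | ⟨ha, hb⟩ | ⟨i, ha, hb, hx⟩ | ⟨i, ha, hb, hx⟩
    · left; intro l
      rw [hw l]; rw [ha, hb, rep_left]
    · right; left; intro l
      rw [hw l]; rw [ha, hb, rep_right _ (comp_ch0 hn hng)]
    · rcases ch0_eq_Y hn hng hx with ⟨h2, hi⟩
      subst hi
      right; right
      refine ⟨h2, fun l => ?_⟩
      rw [hw l, ha, hb, h2]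
      rw [show EB.A (⟨0, hn⟩ : Fin n) = aa hn from rfl,
        show EB.B (⟨0, hn⟩ : Fin n) = bb hn from rfl, rep_ch0_tw]
    · exact absurd hx (ch0_ne_X hn hng hlt _ _)
  · rintro (h | h | ⟨h2, h⟩)
    · have ha : w mm.castSucc = .e (EB.left (ch hn hng 0 (mm:ℕ))) := by
        have := h mm.castSucc
        rwa [Fin.coe_castSucc, ti_eq] at this
      have hb : w mm.succ = ch hn hng 0 (mm:ℕ) := by
        have := h mm.succ
        rw [Fin.val_succ, ti_gt _ (by omega)] at this
        simpa using this
      have : some v = some (ch hn hng 0 (mm:ℕ)) := by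
        rw [← hv, ha, hb, mul_e_self]
      refine ⟨Option.some.inj this, fun l => ?_⟩
      rw [ha, hb, rep_left]; exact h l
    · have ha : w mm.castSucc = ch hn hng 0 (mm:ℕ) := by
        have := h mm.castSucc
        rwa [Fin.coe_castSucc, ti_lt _ (by omega)] at this
      have hb : w mm.succ = .e (EB.right (ch hn hng 0 (mm:ℕ))) := by
        have := h mm.succ
        rw [Fin.val_succ, ti_eq, ← comp_ch0 hn hng] at this
        exact this
      have : some v = some (ch hn hng 0 (mm:ℕ)) := by
        rw [← hv, ha, hb, mul_self_e]
      refine ⟨Option.some.inj this, fun l => ?_⟩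
      rw [ha, hb, rep_right _ (comp_ch0 hn hng)]; exact h l
    · have ha : w mm.castSucc = aa hn := by
        have := h mm.castSucc; rw [Fin.coe_castSucc, h2] at this; exact this
      have hb : w mm.succ = bb hn := by
        have := h mm.succ; rw [Fin.val_succ, h2] at this; exact this
      have : some v = some (yy hn) := by rw [← hv, ha, hb, mul_aa_bb]
      have hvx : v = yy hn := Option.some.inj this
      refine ⟨by rw [hvx, h2]; rfl, fun l => ?_⟩
      rw [ha, hb, h2, rep_ch0_tw]; exact h l

end Char
section Summand
variable {g n : ℕ} (hn : 0 < n) (hng : n ≤ g)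

lemma ti_pair (τ : ℕ → EB g n) {m : ℕ} (w : Fin (m+2) → EB g n) (mm : Fin (m+1))
    (h : ∀ l : Fin (m+2), w l = ti τ (mm:ℕ) l.val) :
    EB.mul hng (w mm.castSucc) (w mm.succ) = some (τ (mm:ℕ)) := by
  have ha := h mm.castSucc
  rw [Fin.coe_castSucc, ti_eq] at ha
  have hb := h mm.succ
  rw [Fin.val_succ, ti_gt _ (by omega)] at hb
  simp only [Nat.add_sub_cancel] at hb
  rw [ha, hb, mul_e_self]

lemma ti_pair' (τ : ℕ → EB g n) (hcomp : ∀ l, EB.right (τ l) = EB.left (τ (l+1)))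
    {m : ℕ} (w : Fin (m+2) → EB g n) (mm : Fin (m+1))
    (h : ∀ l : Fin (m+2), w l = ti τ ((mm:ℕ)+1) l.val) :
    EB.mul hng (w mm.castSucc) (w mm.succ) = some (τ (mm:ℕ)) := by
  have ha := h mm.castSucc
  rw [Fin.coe_castSucc, ti_lt _ (by omega)] at ha
  have hb := h mm.succ
  rw [Fin.val_succ, ti_eq, ← hcomp] at hb
  rw [ha, hb, mul_self_e]

lemma tw_pair1 {m : ℕ} (w : Fin (m+2) → EB g n) (mm : Fin (m+1)) (h1 : (mm:ℕ) = 1)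
    (h : ∀ l : Fin (m+2), w l = tw hn hng l.val) :
    EB.mul hng (w mm.castSucc) (w mm.succ) = some (yy hn) := by
  have ha := h mm.castSucc
  rw [Fin.coe_castSucc, h1] at ha
  have hb := h mm.succ
  rw [Fin.val_succ, h1] at hb
  rw [ha, hb]; exact mul_aa_bb hn hng

lemma tw_pair2 {m : ℕ} (w : Fin (m+2) → EB g n) (mm : Fin (m+1)) (h1 : (mm:ℕ) = 2)
    (h : ∀ l : Fin (m+2), w l = tw hn hng l.val) :
    EB.mul hng (w mm.castSucc) (w mm.succ) = some (x0 hn hng) := by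
  have ha := h mm.castSucc
  rw [Fin.coe_castSucc, h1] at ha
  have hb := h mm.succ
  rw [Fin.val_succ, h1] at hb
  rw [ha, hb]; exact mul_bb_aa hn hng

lemma excl_ti (τ : ℕ → EB g n) (hne : ∀ l i, τ l ≠ .e i) {m : ℕ}
    (w : Fin (m+2) → EB g n) (mm : Fin (m+1))
    (h : ∀ l : Fin (m+2), w l = ti τ (mm:ℕ) l.val)
    (h' : ∀ l : Fin (m+2), w l = ti τ ((mm:ℕ)+1) l.val) : False := by
  have ha := h mm.castSucc
  rw [Fin.coe_castSucc, ti_eq] at ha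
  have hb := h' mm.castSucc
  rw [Fin.coe_castSucc, ti_lt _ (by omega)] at hb
  exact hne (mm:ℕ) _ (hb.symm.trans ha)

lemma excl_tw (τ : ℕ → EB g n) (hne : ∀ l i, τ l ≠ .e i) {m : ℕ} (q : ℕ)
    (w : Fin (m+2) → EB g n) (hq : q < m + 2)
    (h : ∀ l : Fin (m+2), w l = ti τ q l.val)
    (h' : ∀ l : Fin (m+2), w l = tw hn hng l.val) : False := by
  have ha := h ⟨q, hq⟩
  have hb := h' ⟨q, hq⟩
  simp only [Fin.val_mk] at ha hb
  rw [ti_eq] at ha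
  exact tw_ne_e hn hng q _ (hb.symm.trans ha)

lemma ite_or3 {k : Type*} [Field k] {P Q R : Prop} [Decidable P] [Decidable Q] [Decidable R]
    (hpq : P → Q → False) (hpr : P → R → False) (hqr : Q → R → False) :
    (if P ∨ Q ∨ R then (1:k) else 0)
      = (if P then (1:k) else 0) + (if Q then (1:k) else 0) + (if R then (1:k) else 0) := by
  by_cases hP : P <;> by_cases hQ : Q <;> by_cases hR : R <;> simp_all

lemma summand (k : Type*) [Field k] (hlt : n < g) (m : ℕ)
    (w : Fin (m+2) → EB g n) (u : EB g n) (mm : Fin (m+1)) :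
    (-1:k)^((mm:ℕ)+1) * ((EB.mul hng (w mm.castSucc) (w mm.succ)).elim 0 (fun v =>
        cc hn hng k m (fun l => if (l:ℕ) < (mm:ℕ) then w l.castSucc
          else if (l:ℕ) = (mm:ℕ) then v else w l.succ) u))
    = GG hn hng k m w u ((mm:ℕ)+1) - GG hn hng k m w u (mm:ℕ)
      + (if ((mm:ℕ) = 1 ∧ (∀ l : Fin (m+2), w l = tw hn hng l.val) ∧ u = xt hn hng)
          then 1 else 0)
      - (if ((mm:ℕ) = 2 ∧ (∀ l : Fin (m+2), w l = tw hn hng l.val) ∧ u = xt hn hng)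
          then 1 else 0) := by
  cases hv : EB.mul hng (w mm.castSucc) (w mm.succ) with
  | none =>
    have k1 : ¬((∀ l : Fin (m+2), w l = ti (t1 hn hng) (mm:ℕ) l.val) ∧ u = xt hn hng) :=
      fun ⟨h, _⟩ => by rw [ti_pair hng _ w mm h] at hv; cases hv
    have k2 : ¬((∀ l : Fin (m+2), w l = ti (ch hn hng 0) (mm:ℕ) l.val) ∧ u = xt hn hng) :=
      fun ⟨h, _⟩ => by rw [ti_pair hng _ w mm h] at hv; cases hv
    have k3 : ¬((∀ l : Fin (m+2), w l = ti (t1 hn hng) ((mm:ℕ)+1) l.val) ∧ u = xt hn hng) :=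
      fun ⟨h, _⟩ => by
        rw [ti_pair' hng _ (comp_t1 hn hng) w mm h] at hv; cases hv
    have k4 : ¬((∀ l : Fin (m+2), w l = ti (ch hn hng 0) ((mm:ℕ)+1) l.val) ∧ u = xt hn hng) :=
      fun ⟨h, _⟩ => by
        rw [ti_pair' hng _ (comp_ch0 hn hng) w mm h] at hv; cases hv
    have k5 : ¬((mm:ℕ) = 1 ∧ (∀ l : Fin (m+2), w l = tw hn hng l.val) ∧ u = xt hn hng) :=
      fun ⟨h1, h, _⟩ => by rw [tw_pair1 hn hng w mm h1 h] at hv; cases hv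
    have k6 : ¬((mm:ℕ) = 2 ∧ (∀ l : Fin (m+2), w l = tw hn hng l.val) ∧ u = xt hn hng) :=
      fun ⟨h1, h, _⟩ => by rw [tw_pair2 hn hng w mm h1 h] at hv; cases hv
    rw [if_neg k5, if_neg k6]
    unfold GG
    rw [if_neg k1, if_neg k2, if_neg k3, if_neg k4]
    simp
  | some v =>
    by_cases hu : u = xt hn hng
    · subst hu
      simp only [Option.elim_some]
      unfold cc GG
      simp only [eq_self_iff_true, and_true]
      simp only [coll_t1_iff hn hng hlt w mm v hv, coll_ch0_iff hn hng hlt w mm v hv]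
      rw [ite_or3 (excl_ti (t1 hn hng) (t1_ne_e hn hng) w mm)
        (fun h h' => excl_tw hn hng (t1 hn hng) (t1_ne_e hn hng) (mm:ℕ) w (by omega) h h'.2)
        (fun h h' => excl_tw hn hng (t1 hn hng) (t1_ne_e hn hng) ((mm:ℕ)+1) w (by omega) h h'.2),
        ite_or3 (excl_ti (ch hn hng 0) (ch0_ne_e hn hng) w mm)
        (fun h h' => excl_tw hn hng (ch hn hng 0) (ch0_ne_e hn hng) (mm:ℕ) w (by omega) h h'.2)
        (fun h h' => excl_tw hn hng (ch hn hng 0) (ch0_ne_e hn hng) ((mm:ℕ)+1) w (by omega) h h'.2)]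
      by_cases hm1 : (mm:ℕ) = 1
      · rw [if_neg (fun h => by omega : ¬((mm:ℕ) = 2 ∧ ∀ l : Fin (m+2), w l = tw hn hng l.val))]
        rw [hm1]
        norm_num
        ring
      · by_cases hm2 : (mm:ℕ) = 2
        · rw [if_neg (fun h => by omega : ¬((mm:ℕ) = 1 ∧ ∀ l : Fin (m+2), w l = tw hn hng l.val))]
          rw [hm2]
          norm_num [pow_succ]
          ring
        · rw [if_neg (fun h => by omega : ¬((mm:ℕ) = 1 ∧ ∀ l : Fin (m+2), w l = tw hn hng l.val)),
            if_neg (fun h => by omega : ¬((mm:ℕ) = 2 ∧ ∀ l : Fin (m+2), w l = tw hn hng l.val))]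
          simp only [pow_succ]
          ring
    · have k5 : ¬((mm:ℕ) = 1 ∧ (∀ l : Fin (m+2), w l = tw hn hng l.val) ∧ u = xt hn hng) :=
        fun h => hu h.2.2
      have k6 : ¬((mm:ℕ) = 2 ∧ (∀ l : Fin (m+2), w l = tw hn hng l.val) ∧ u = xt hn hng) :=
        fun h => hu h.2.2
      rw [if_neg k5, if_neg k6]
      unfold cc GG
      simp only [Option.elim_some]
      rw [if_neg (fun h => hu h.2), if_neg (fun h => hu h.2), if_neg (fun h => hu h.2),
        if_neg (fun h => hu h.2), if_neg (fun h => hu h.2), if_neg (fun h => hu h.2)]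
      ring

end Summand
section Assemble
variable {g n : ℕ} (hn : 0 < n) (hng : n ≤ g)

lemma middle_sum (k : Type*) [Field k] (hlt : n < g) (m : ℕ) (hm : 4 ≤ m)
    (w : Fin (m+2) → EB g n) (u : EB g n) :
    (∑ mm : Fin (m+1), (-1:k)^((mm:ℕ)+1) *
      ((EB.mul hng (w mm.castSucc) (w mm.succ)).elim 0 (fun v =>
        cc hn hng k m (fun l => if (l:ℕ) < (mm:ℕ) then w l.castSucc
          else if (l:ℕ) = (mm:ℕ) then v else w l.succ) u)))
    = GG hn hng k m w u (m+1) - GG hn hng k m w u 0 := by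
  have hsplit : ∀ mm : Fin (m+1),
      GG hn hng k m w u ((mm:ℕ)+1) - GG hn hng k m w u (mm:ℕ)
      + (if ((mm:ℕ) = 1 ∧ (∀ l : Fin (m+2), w l = tw hn hng l.val) ∧ u = xt hn hng)
          then (1:k) else 0)
      - (if ((mm:ℕ) = 2 ∧ (∀ l : Fin (m+2), w l = tw hn hng l.val) ∧ u = xt hn hng)
          then (1:k) else 0)
      = (GG hn hng k m w u ((mm:ℕ)+1) - GG hn hng k m w u (mm:ℕ))
        + ((if ((mm:ℕ) = 1) then (if ((∀ l : Fin (m+2), w l = tw hn hng l.val) ∧ u = xt hn hng) then (1:k) else 0) else 0)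
        - (if ((mm:ℕ) = 2) then (if ((∀ l : Fin (m+2), w l = tw hn hng l.val) ∧ u = xt hn hng) then (1:k) else 0) else 0)) := by
    intro mm
    by_cases h1 : (mm:ℕ) = 1 <;> by_cases h2 : (mm:ℕ) = 2 <;>
      simp [h1, h2] <;> ring
  rw [Finset.sum_congr rfl (fun mm _ => (summand hn hng k hlt m w u mm).trans (hsplit mm))]
  rw [Finset.sum_add_distrib]
  have e1 : (∑ mm : Fin (m+1), (GG hn hng k m w u ((mm:ℕ)+1) - GG hn hng k m w u (mm:ℕ)))
      = GG hn hng k m w u (m+1) - GG hn hng k m w u 0 := by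
    rw [Fin.sum_univ_eq_sum_range (fun q => GG hn hng k m w u (q+1) - GG hn hng k m w u q) (m+1),
      Finset.sum_range_sub (fun q => GG hn hng k m w u q) (m+1)]
  have e2 : (∑ mm : Fin (m+1), (if ((mm:ℕ) = 1) then (if ((∀ l : Fin (m+2), w l = tw hn hng l.val) ∧ u = xt hn hng) then (1:k) else 0) else 0))
      = (if ((∀ l : Fin (m+2), w l = tw hn hng l.val) ∧ u = xt hn hng) then (1:k) else 0) := by
    rw [Fin.sum_univ_eq_sum_range (fun q => if q = 1 then (if ((∀ l : Fin (m+2), w l = tw hn hng l.val) ∧ u = xt hn hng) then (1:k) else 0) else 0) (m+1),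
      Finset.sum_ite_eq' (Finset.range (m+1)) 1
        (fun _ => (if ((∀ l : Fin (m+2), w l = tw hn hng l.val) ∧ u = xt hn hng) then (1:k) else 0))]
    rw [if_pos (Finset.mem_range.mpr (by omega))]
  have e3 : (∑ mm : Fin (m+1), (if ((mm:ℕ) = 2) then (if ((∀ l : Fin (m+2), w l = tw hn hng l.val) ∧ u = xt hn hng) then (1:k) else 0) else 0))
      = (if ((∀ l : Fin (m+2), w l = tw hn hng l.val) ∧ u = xt hn hng) then (1:k) else 0) := by
    rw [Fin.sum_univ_eq_sum_range (fun q => if q = 2 then (if ((∀ l : Fin (m+2), w l = tw hn hng l.val) ∧ u = xt hn hng) then (1:k) else 0) else 0) (m+1),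
      Finset.sum_ite_eq' (Finset.range (m+1)) 2
        (fun _ => (if ((∀ l : Fin (m+2), w l = tw hn hng l.val) ∧ u = xt hn hng) then (1:k) else 0))]
    rw [if_pos (Finset.mem_range.mpr (by omega))]
  rw [e1, Finset.sum_sub_distrib, e2, e3]
  ring

lemma shift_zero_iff (τ : ℕ → EB g n) (hleft : EB.left (τ 0) = 0) (m : ℕ)
    (w : Fin (m+2) → EB g n) :
    (w 0 = .e 0 ∧ ∀ l : Fin (m+1), w l.succ = τ l.val)
    ↔ (∀ l : Fin (m+2), w l = ti τ 0 l.val) := by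
  constructor
  · rintro ⟨h0, h⟩ l
    rcases Fin.eq_zero_or_eq_succ l with rfl | ⟨j, rfl⟩
    · rw [h0]
      rw [show ((0 : Fin (m+2)) : ℕ) = 0 from rfl, ti_eq, hleft]
    · rw [h j]
      rw [Fin.val_succ, ti_gt _ (by omega), Nat.add_sub_cancel]
  · intro h
    constructor
    · have := h 0
      rwa [show ((0 : Fin (m+2)) : ℕ) = 0 from rfl, ti_eq, hleft] at this
    · intro l
      have := h l.succ
      rwa [Fin.val_succ, ti_gt _ (by omega), Nat.add_sub_cancel] at this

lemma last_shift_iff (τ : ℕ → EB g n) (m : ℕ) (hleft : EB.left (τ (m+1)) = 0)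
    (w : Fin (m+2) → EB g n) :
    (w (Fin.last (m+1)) = .e 0 ∧ ∀ l : Fin (m+1), w l.castSucc = τ l.val)
    ↔ (∀ l : Fin (m+2), w l = ti τ (m+1) l.val) := by
  constructor
  · rintro ⟨h0, h⟩ l
    rcases Fin.eq_castSucc_or_eq_last l with ⟨j, rfl⟩ | rfl
    · rw [h j, Fin.coe_castSucc, ti_lt _ (by omega)]
    · rw [h0, Fin.val_last, ti_eq, hleft]
  · intro h
    constructor
    · have := h (Fin.last (m+1))
      rwa [Fin.val_last, ti_eq, hleft] at this
    · intro l
      have := h l.castSucc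
      rwa [Fin.coe_castSucc, ti_lt _ (by omega)] at this

lemma first_term (k : Type*) [Field k] (m : ℕ) (w : Fin (m+2) → EB g n) (u : EB g n) :
    (∑ v : EB g n, if EB.mul hng (w 0) v = some u
      then cc hn hng k m (fun l => w l.succ) v else 0)
    = GG hn hng k m w u 0 := by
  have step1 : ∀ v : EB g n, (if EB.mul hng (w 0) v = some u
      then cc hn hng k m (fun l => w l.succ) v else 0)
      = if v = xt hn hng then (if (w 0 = .e 0 ∧ u = xt hn hng)
          then cc hn hng k m (fun l => w l.succ) (xt hn hng) else 0) else 0 := by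
    intro v
    by_cases hvx : v = xt hn hng
    · subst hvx
      rw [if_pos rfl]
      congr 1
      · exact propext (mul_xt_right_iff hn hng)
    · rw [if_neg hvx]
      have : cc hn hng k m (fun l => w l.succ) v = 0 := by
        unfold cc
        rw [if_neg (fun h => hvx h.2), if_neg (fun h => hvx h.2)]
        ring
      rw [this, ite_self]
  rw [Finset.sum_congr rfl (fun v _ => step1 v), Finset.sum_ite_eq' Finset.univ (xt hn hng)
    (fun _ => (if (w 0 = .e 0 ∧ u = xt hn hng) then cc hn hng k m (fun l => w l.succ) (xt hn hng) else 0)),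
    if_pos (Finset.mem_univ _)]
  unfold cc GG
  simp only [eq_self_iff_true, and_true, pow_zero, one_mul]
  by_cases hu : u = xt hn hng
  · simp only [hu, eq_self_iff_true, and_true]
    by_cases h0 : w 0 = EB.e 0
    · rw [if_pos h0]
      have i1 := shift_zero_iff (t1 hn hng) rfl m w
      have i2 := shift_zero_iff (ch hn hng 0) rfl m w
      by_cases hA : ∀ l : Fin (m+1), w l.succ = t1 hn hng l.val
      · rw [if_pos (i1.mp ⟨h0, hA⟩), if_pos hA]
        by_cases hB : ∀ l : Fin (m+1), w l.succ = ch hn hng 0 l.val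
        · rw [if_pos (i2.mp ⟨h0, hB⟩), if_pos hB]
        · rw [if_neg (fun h => hB (i2.mpr h).2), if_neg hB]
      · rw [if_neg (fun h => hA (i1.mpr h).2), if_neg hA]
        by_cases hB : ∀ l : Fin (m+1), w l.succ = ch hn hng 0 l.val
        · rw [if_pos (i2.mp ⟨h0, hB⟩), if_pos hB]
        · rw [if_neg (fun h => hB (i2.mpr h).2), if_neg hB]
    · rw [if_neg h0]
      have i1 := shift_zero_iff (t1 hn hng) rfl m w
      have i2 := shift_zero_iff (ch hn hng 0) rfl m w
      rw [if_neg (fun h => h0 (i1.mpr h).1), if_neg (fun h => h0 (i2.mpr h).1)]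
      ring
  · rw [if_neg (fun h => hu h.2), if_neg (fun h => hu h.2), if_neg (fun h => hu h.2)]
    ring

lemma t1_top (m : ℕ) (hm : 2 ≤ m) : t1 hn hng (m+1) = xt hn hng := by
  rcases m with _|_|l
  · omega
  · omega
  · rfl

lemma ch0_top (m : ℕ) (hm : 2 ≤ m) : ch hn hng 0 (m+1) = xt hn hng := by
  rcases m with _|_|l
  · omega
  · omega
  · exact ch_out hn hng (by omega)

lemma last_term (k : Type*) [Field k] (m : ℕ) (hm : 4 ≤ m) (w : Fin (m+2) → EB g n)
    (u : EB g n) :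
    (∑ v : EB g n, if EB.mul hng v (w (Fin.last (m+1))) = some u
      then cc hn hng k m (fun l => w l.castSucc) v else 0)
    = (if (∀ l : Fin (m+2), w l = ti (t1 hn hng) (m+1) l.val) ∧ u = xt hn hng then (1:k) else 0)
      + (if (∀ l : Fin (m+2), w l = ti (ch hn hng 0) (m+1) l.val) ∧ u = xt hn hng then (1:k) else 0) := by
  have step1 : ∀ v : EB g n, (if EB.mul hng v (w (Fin.last (m+1))) = some u
      then cc hn hng k m (fun l => w l.castSucc) v else 0)
      = if v = xt hn hng then (if (w (Fin.last (m+1)) = .e 0 ∧ u = xt hn hng)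
          then cc hn hng k m (fun l => w l.castSucc) (xt hn hng) else 0) else 0 := by
    intro v
    by_cases hvx : v = xt hn hng
    · subst hvx
      rw [if_pos rfl]
      congr 1
      · exact propext (mul_xt_left_iff hn hng)
    · rw [if_neg hvx]
      have : cc hn hng k m (fun l => w l.castSucc) v = 0 := by
        unfold cc
        rw [if_neg (fun h => hvx h.2), if_neg (fun h => hvx h.2)]
        ring
      rw [this, ite_self]
  rw [Finset.sum_congr rfl (fun v _ => step1 v), Finset.sum_ite_eq' Finset.univ (xt hn hng)
    (fun _ => (if (w (Fin.last (m+1)) = .e 0 ∧ u = xt hn hng)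
      then cc hn hng k m (fun l => w l.castSucc) (xt hn hng) else 0)),
    if_pos (Finset.mem_univ _)]
  have i1 := last_shift_iff (t1 hn hng) m (by rw [t1_top hn hng m (by omega)]; rfl) w
  have i2 := last_shift_iff (ch hn hng 0) m (by rw [ch0_top hn hng m (by omega)]; rfl) w
  unfold cc
  simp only [eq_self_iff_true, and_true]
  by_cases hu : u = xt hn hng
  · simp only [hu, eq_self_iff_true, and_true]
    by_cases h0 : w (Fin.last (m+1)) = EB.e 0
    · rw [if_pos h0]
      by_cases hA : ∀ l : Fin (m+1), w l.castSucc = t1 hn hng l.val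
      · rw [if_pos (i1.mp ⟨h0, hA⟩), if_pos hA]
        by_cases hB : ∀ l : Fin (m+1), w l.castSucc = ch hn hng 0 l.val
        · rw [if_pos (i2.mp ⟨h0, hB⟩), if_pos hB]
        · rw [if_neg (fun h => hB (i2.mpr h).2), if_neg hB]
      · rw [if_neg (fun h => hA (i1.mpr h).2), if_neg hA]
        by_cases hB : ∀ l : Fin (m+1), w l.castSucc = ch hn hng 0 l.val
        · rw [if_pos (i2.mp ⟨h0, hB⟩), if_pos hB]
        · rw [if_neg (fun h => hB (i2.mpr h).2), if_neg hB]
    · rw [if_neg h0]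
      rw [if_neg (fun h => h0 (i1.mpr h).1), if_neg (fun h => h0 (i2.mpr h).1)]
      ring
  · rw [if_neg (fun h => hu h.2), if_neg (fun h => hu h.2), if_neg (fun h => hu h.2)]
    ring

lemma delta_cc (k : Type*) [Field k] (hlt : n < g) (m : ℕ) (hm : 4 ≤ m) :
    hdelta k hng (m+1) (cc hn hng k m) = 0 := by
  funext w u
  show (∑ v : EB g n, if EB.mul hng (w 0) v = some u
      then cc hn hng k m (fun l => w l.succ) v else 0)
    + (∑ mm : Fin (m+1), (-1:k)^((mm:ℕ)+1) *
      ((EB.mul hng (w mm.castSucc) (w mm.succ)).elim 0 (fun v =>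
        cc hn hng k m (fun l => if (l:ℕ) < (mm:ℕ) then w l.castSucc
          else if (l:ℕ) = (mm:ℕ) then v else w l.succ) u)))
    + (-1:k)^(m+1+1) * (∑ v : EB g n, if EB.mul hng v (w (Fin.last (m+1))) = some u
      then cc hn hng k m (fun l => w l.castSucc) v else 0) = 0
  rw [first_term hn hng k m w u, middle_sum hn hng k hlt m hm w u,
    last_term hn hng k m hm w u]
  unfold GG
  rw [pow_succ]
  ring

end Assemble
section NonCobound
variable {g n : ℕ} (hn : 0 < n) (hng : n ≤ g)

lemma ch_succ (q l : ℕ) : ch hn hng (q+1) (l+1) = ch hn hng q l := by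
  unfold ch; split_ifs <;> first | omega | rfl

lemma ch_adj (q a : ℕ) :
    EB.mul hng (ch hn hng q a) (ch hn hng q (a+1)) = none := by
  unfold ch; split_ifs <;> first | omega | rfl

lemma sum_mul_left_xt (k : Type*) [Field k] (f : EB g n → k) :
    (∑ v : EB g n, if EB.mul hng (xt hn hng) v = some (xt hn hng) then f v else 0)
    = f (.e 0) := by
  have step : ∀ v : EB g n, (if EB.mul hng (xt hn hng) v = some (xt hn hng) then f v else 0)
      = if v = .e 0 then f v else 0 := by
    intro v
    refine if_congr ?_ rfl rfl
    rw [mul_xt_left_iff hn hng]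
    simp
  rw [Finset.sum_congr rfl (fun v _ => step v),
    Finset.sum_ite_eq' Finset.univ (EB.e 0 : EB g n) f, if_pos (Finset.mem_univ _)]

lemma sum_mul_right_xt (k : Type*) [Field k] (f : EB g n → k) :
    (∑ v : EB g n, if EB.mul hng v (xt hn hng) = some (xt hn hng) then f v else 0)
    = f (.e 0) := by
  have step : ∀ v : EB g n, (if EB.mul hng v (xt hn hng) = some (xt hn hng) then f v else 0)
      = if v = .e 0 then f v else 0 := by
    intro v
    refine if_congr ?_ rfl rfl
    rw [mul_xt_right_iff hn hng]
    simp
  rw [Finset.sum_congr rfl (fun v _ => step v),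
    Finset.sum_ite_eq' Finset.univ (EB.e 0 : EB g n) f, if_pos (Finset.mem_univ _)]

lemma sum_mul_bb (k : Type*) [Field k] (hlt : n < g) (f : EB g n → k) :
    (∑ v : EB g n, if EB.mul hng (bb hn) v = some (xt hn hng) then f v else 0) = 0 :=
  Finset.sum_eq_zero (fun v _ => if_neg (mul_bb_ne_xt hn hng hlt v))

lemma sum_mul_aa_right (k : Type*) [Field k] (hlt : n < g) (f : EB g n → k) :
    (∑ v : EB g n, if EB.mul hng v (aa hn) = some (xt hn hng) then f v else 0) = 0 :=
  Finset.sum_eq_zero (fun v _ => if_neg (mul_aa_right_ne_xt hn hng hlt v))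

lemma hdelta_ch (k : Type*) [Field k] (hlt : n < g) (m : ℕ) (hm : 4 ≤ m)
    (b : HCochain k g n m) (p : ℕ) (hp : p + 3 ≤ m) :
    hdelta k hng m b (fun l : Fin (m+1) => ch hn hng (p+1) l.val) (xt hn hng)
    = b (fun l : Fin m => ch hn hng p l.val) (.e 0)
      + (-1:k)^(m+1) *
        (if p + 3 = m then 0 else b (fun l : Fin m => ch hn hng (p+1) l.val) (.e 0)) := by
  unfold hdelta
  simp only [Fin.val_zero, Fin.val_succ, Fin.coe_castSucc, Fin.val_last]
  simp only [show ch hn hng (p+1) 0 = xt hn hng from ch_out hn hng (by omega)]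
  rw [sum_mul_left_xt hn hng k]
  rw [show (fun l : Fin m => ch hn hng (p+1) ((l:ℕ)+1)) = (fun l : Fin m => ch hn hng p (l:ℕ))
    from funext fun l => ch_succ hn hng p (l:ℕ)]
  have hmid : ∀ mm : Fin m, (-1:k) ^ ((mm:ℕ) + 1) *
      ((EB.mul hng (ch hn hng (p+1) (mm:ℕ)) (ch hn hng (p+1) ((mm:ℕ)+1))).elim 0 (fun v =>
        b (fun l => if (l : ℕ) < (mm : ℕ) then ch hn hng (p+1) (l:ℕ)
          else if (l : ℕ) = (mm : ℕ) then v else ch hn hng (p+1) ((l:ℕ)+1)) (xt hn hng))) = 0 := by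
    intro mm
    rw [ch_adj hn hng (p+1) (mm:ℕ)]
    simp
  rw [Finset.sum_congr rfl (fun mm _ => hmid mm), Finset.sum_const_zero]
  by_cases hpm : p + 3 = m
  · rw [show ch hn hng (p+1) m = aa hn from by
      rw [show m = (p+1)+2 from by omega]; exact ch_eq2 hn hng (p+1)]
    rw [sum_mul_aa_right hn hng k hlt]
    rw [if_pos hpm]
    ring
  · rw [show ch hn hng (p+1) m = xt hn hng from ch_out hn hng (by omega)]
    rw [sum_mul_right_xt hn hng k]
    rw [if_neg hpm]
    ring

lemma xt_ne_bb : xt hn hng ≠ bb hn := by simp [xt, bb]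

lemma cc_ch_zero (k : Type*) [Field k] (m : ℕ) (p : ℕ) :
    cc hn hng k m (fun l : Fin (m+1) => ch hn hng (p+1) l.val) (xt hn hng) = 0 := by
  unfold cc
  have h1 : ¬(∀ l : Fin (m+1), ch hn hng (p+1) (l:ℕ) = t1 hn hng (l:ℕ)) := by
    intro h
    have := h 0
    rw [Fin.val_zero] at this
    rw [ch_out hn hng (by omega)] at this
    exact xt_ne_bb hn hng this
  have h2 : ¬(∀ l : Fin (m+1), ch hn hng (p+1) (l:ℕ) = ch hn hng 0 (l:ℕ)) := by
    intro h
    have := h 0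
    rw [Fin.val_zero] at this
    rw [ch_out hn hng (by omega)] at this
    rw [show ch hn hng 0 0 = bb hn from ch_eq0 hn hng 0] at this
    exact xt_ne_bb hn hng this
  rw [if_neg (fun h => h1 h.1), if_neg (fun h => h2 h.1)]
  ring

lemma hdelta_t2 (k : Type*) [Field k] (hlt : n < g) (m : ℕ) (hm : 4 ≤ m)
    (b : HCochain k g n m) :
    hdelta k hng m b (fun l : Fin (m+1) => ch hn hng 0 l.val) (xt hn hng)
    = (-1:k)^(m+1) * b (fun l : Fin m => ch hn hng 0 l.val) (.e 0) := by
  unfold hdelta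
  simp only [Fin.val_zero, Fin.val_succ, Fin.coe_castSucc, Fin.val_last]
  simp only [show ch hn hng 0 0 = bb hn from ch_eq0 hn hng 0]
  rw [sum_mul_bb hn hng k hlt]
  have hmid : ∀ mm : Fin m, (-1:k) ^ ((mm:ℕ) + 1) *
      ((EB.mul hng (ch hn hng 0 (mm:ℕ)) (ch hn hng 0 ((mm:ℕ)+1))).elim 0 (fun v =>
        b (fun l => if (l : ℕ) < (mm : ℕ) then ch hn hng 0 (l:ℕ)
          else if (l : ℕ) = (mm : ℕ) then v else ch hn hng 0 ((l:ℕ)+1)) (xt hn hng))) = 0 := by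
    intro mm
    rw [ch_adj hn hng 0 (mm:ℕ)]
    simp
  rw [Finset.sum_congr rfl (fun mm _ => hmid mm), Finset.sum_const_zero]
  rw [show ch hn hng 0 m = xt hn hng from ch_out hn hng (by omega)]
  rw [sum_mul_right_xt hn hng k]
  ring

lemma cc_t2_one (k : Type*) [Field k] (m : ℕ) (hm : 4 ≤ m) :
    cc hn hng k m (fun l : Fin (m+1) => ch hn hng 0 l.val) (xt hn hng) = 1 := by
  unfold cc
  have h1 : ¬(∀ l : Fin (m+1), ch hn hng 0 (l:ℕ) = t1 hn hng (l:ℕ)) := by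
    intro h
    have := h ⟨1, by omega⟩
    simp only [Fin.val_mk] at this
    rw [show ch hn hng 0 1 = yy hn from by
      rw [show (1:ℕ) = 0 + 1 from rfl]; exact ch_eq1 hn hng 0] at this
    simp [yy, t1, aa] at this
  rw [if_neg (fun h => h1 h.1), if_pos ⟨fun l => rfl, rfl⟩]
  ring

lemma chain_zero (k : Type*) [Field k] (hlt : n < g) (m : ℕ) (hm : 4 ≤ m)
    (b : HCochain k g n m)
    (hd : hdelta k hng m b = cc hn hng k m) :
    ∀ d p, p + 3 ≤ m → m - 3 - p = d → b (fun l : Fin m => ch hn hng p l.val) (.e 0) = 0 := by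
  intro d
  induction d with
  | zero =>
    intro p hp hd0
    have heq := congrFun (congrFun hd (fun l : Fin (m+1) => ch hn hng (p+1) l.val)) (xt hn hng)
    rw [hdelta_ch hn hng k hlt m hm b p hp, cc_ch_zero hn hng k m p] at heq
    rw [if_pos (by omega : p + 3 = m)] at heq
    simpa using heq
  | succ d ih =>
    intro p hp hd0
    have heq := congrFun (congrFun hd (fun l : Fin (m+1) => ch hn hng (p+1) l.val)) (xt hn hng)
    rw [hdelta_ch hn hng k hlt m hm b p hp, cc_ch_zero hn hng k m p] at heq
    rw [if_neg (by omega : ¬ p + 3 = m)] at heq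
    rw [ih (p+1) (by omega) (by omega)] at heq
    simpa using heq

lemma no_cobound (k : Type*) [Field k] (hlt : n < g) (m : ℕ) (hm : 4 ≤ m)
    (b : HCochain k g n m) (hd : hdelta k hng m b = cc hn hng k m) : False := by
  have h0 : b (fun l : Fin m => ch hn hng 0 l.val) (.e 0) = 0 :=
    chain_zero hn hng k hlt m hm b hd (m - 3) 0 (by omega) (by omega)
  have heq := congrFun (congrFun hd (fun l : Fin (m+1) => ch hn hng 0 l.val)) (xt hn hng)
  rw [hdelta_t2 hn hng k hlt m hm b, cc_t2_one hn hng k m hm, h0] at heq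
  simp at heq

end NonCobound
section Homog
variable {g n : ℕ} (hn : 0 < n) (hng : n ≤ g)

lemma deg_t1 (l : ℕ) : (EB.deg (t1 hn hng l) : ℤ) = 1 - (if l = 1 then 1 else 0) := by
  rcases l with _|_|_|l <;> simp [t1, bb, aa, x0, xt, EB.deg]

lemma deg_ch0 (l : ℕ) : (EB.deg (ch hn hng 0 l) : ℤ) = 1 - (if l = 2 then 1 else 0) := by
  rcases l with _|_|_|l <;> simp [ch, bb, yy, aa, xt, EB.deg]

lemma sum_deg (m : ℕ) (τ : ℕ → EB g n) (j0 : ℕ) (hj : j0 < m+1)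
    (hd : ∀ l : ℕ, (EB.deg (τ l) : ℤ) = 1 - (if l = j0 then 1 else 0)) :
    (∑ l : Fin (m+1), (EB.deg (τ (l:ℕ)) : ℤ)) = m := by
  rw [show (∑ l : Fin (m+1), (EB.deg (τ (l:ℕ)) : ℤ))
      = ∑ l : Fin (m+1), ((1:ℤ) - if (l:ℕ) = j0 then 1 else 0) from
    Finset.sum_congr rfl (fun l _ => hd (l:ℕ))]
  rw [Fin.sum_univ_eq_sum_range (fun q => (1:ℤ) - if q = j0 then 1 else 0) (m+1)]
  rw [Finset.sum_sub_distrib, Finset.sum_const, Finset.card_range,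
    Finset.sum_ite_eq' (Finset.range (m+1)) j0 (fun _ => (1:ℤ)),
    if_pos (Finset.mem_range.mpr hj)]
  simp [nsmul_eq_mul]

lemma deg_xt : (EB.deg (xt hn hng) : ℤ) = 1 := by simp [xt, EB.deg]

lemma homog_cc (k : Type*) [Field k] (m : ℕ) (hm : 4 ≤ m) :
    IsHomog k (m+1) (2 - ((m : ℤ) + 1)) (cc hn hng k m) := by
  intro w u hne
  unfold cc at hne
  by_cases h1 : (∀ l : Fin (m+1), w l = t1 hn hng l.val) ∧ u = xt hn hng
  · have hsum : (∑ l : Fin (m+1), (EB.deg (w l) : ℤ)) = m := by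
      rw [show (∑ l : Fin (m+1), (EB.deg (w l) : ℤ))
          = ∑ l : Fin (m+1), (EB.deg (t1 hn hng (l:ℕ)) : ℤ) from
        Finset.sum_congr rfl (fun l _ => by rw [h1.1 l])]
      exact sum_deg m (t1 hn hng) 1 (by omega) (deg_t1 hn hng)
    rw [h1.2, deg_xt hn hng, hsum]
    ring
  · by_cases h2 : (∀ l : Fin (m+1), w l = ch hn hng 0 l.val) ∧ u = xt hn hng
    · have hsum : (∑ l : Fin (m+1), (EB.deg (w l) : ℤ)) = m := by
        rw [show (∑ l : Fin (m+1), (EB.deg (w l) : ℤ))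
            = ∑ l : Fin (m+1), (EB.deg (ch hn hng 0 (l:ℕ)) : ℤ) from
          Finset.sum_congr rfl (fun l _ => by rw [h2.1 l])]
        exact sum_deg m (ch hn hng 0) 2 (by omega) (deg_ch0 hn hng)
      rw [h2.2, deg_xt hn hng, hsum]
      ring
    · exfalso
      rw [if_neg h1, if_neg h2] at hne
      simp at hne

end Homog

end HHW

/-- Theorem 1.1(ii) of the paper: for `1 ≤ n < g`, `HH^i(E_{g,n})_{2-i} ≠ 0`
for every `i ≥ 5` (writing `i = m + 1`, i.e. `m ≥ 4`): there is a homogeneous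
cocycle of internal degree `2 - i` which is not the differential of any
homogeneous cochain. -/
theorem stmt_2 (k : Type*) [Field k] (g n : ℕ) (h1 : 1 ≤ n) (h2 : n < g) :
    ∀ m : ℕ, 4 ≤ m →
      ∃ c : HCochain k g n (m + 1),
        IsHomog k (m + 1) (2 - ((m : ℤ) + 1)) c ∧
        hdelta k h2.le (m + 1) c = 0 ∧
        ∀ b : HCochain k g n m, IsHomog k m (2 - ((m : ℤ) + 1)) b →
          hdelta k h2.le m b ≠ c := by
  intro m hm
  have hn : 0 < n := h1
  exact ⟨HHW.cc hn h2.le k m,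
    HHW.homog_cc hn h2.le k m hm,
    HHW.delta_cc hn h2.le k h2 m hm,
    fun b _ hdb => HHW.no_cobound hn h2.le k h2 m hm b hdb⟩

end
end

section
/- Let k be a field, 1 ≤ n < g, and i ≥ 5. Set X := X_{n+1} ∈ E_{g,n}. Then the Hochschild i-cochain c := [(X, B_1, Y_1, A_1, X, …, X)]^* X_1 + [(X, X_1, B_1, A_1, X, …, X)]^* X_1 (each tuple has length i, ending in i−4 copies of X) lies in C^i(E_{g,n})_{2−i}, satisfies δ(c) = 0, and is not a coboundary, i.e. c ∉ δ(C^{i−1}(E_{g,n})_{2−i}). -/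
noncomputable section

variable (k : Type*) [Field k]

/-- The Hochschild `i`-cochain (for `i = m+1 ≥ 5`)
`c = [X B₁ Y₁ A₁ X^{i-4}]^* X₁ + [X X₁ B₁ A₁ X^{i-4}]^* X₁` on `E_{g,n}`,
where `X = X_{n+1}` (which exists since `n < g`). -/
def xiCocycle {k : Type*} [Field k] {g n : ℕ} (h1 : 1 ≤ n) (h2 : n < g) (m : ℕ) :
    HCochain k g n (m + 1) := fun w u =>
  (if (w = fun l : Fin (m + 1) =>
        if (l : ℕ) = 0 then EB.X ⟨n, h2⟩
        else if (l : ℕ) = 1 then EB.B ⟨0, h1⟩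
        else if (l : ℕ) = 2 then EB.Y ⟨0, h1⟩
        else if (l : ℕ) = 3 then EB.A ⟨0, h1⟩
        else EB.X ⟨n, h2⟩) ∧ u = EB.X (Fin.castLE h2.le ⟨0, h1⟩) then 1 else 0)
  + (if (w = fun l : Fin (m + 1) =>
        if (l : ℕ) = 0 then EB.X ⟨n, h2⟩
        else if (l : ℕ) = 1 then EB.X (Fin.castLE h2.le ⟨0, h1⟩)
        else if (l : ℕ) = 2 then EB.B ⟨0, h1⟩
        else if (l : ℕ) = 3 then EB.A ⟨0, h1⟩
        else EB.X ⟨n, h2⟩) ∧ u = EB.X (Fin.castLE h2.le ⟨0, h1⟩) then 1 else 0)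

namespace XiProof

open EB

variable {g n : ℕ}

/-- The element `X₁`. -/
def X1 (h1 : 1 ≤ n) (h2 : n < g) : EB g n := EB.X (Fin.castLE h2.le ⟨0, h1⟩)

/-- The two template tuples, as functions of a natural number index. -/
def tpl (h1 : 1 ≤ n) (h2 : n < g) : Bool → ℕ → EB g n
  | true, l =>
        if l = 0 then EB.X ⟨n, h2⟩
        else if l = 1 then EB.B ⟨0, h1⟩
        else if l = 2 then EB.Y ⟨0, h1⟩
        else if l = 3 then EB.A ⟨0, h1⟩
        else EB.X ⟨n, h2⟩
  | false, l =>
        if l = 0 then EB.X ⟨n, h2⟩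
        else if l = 1 then EB.X (Fin.castLE h2.le ⟨0, h1⟩)
        else if l = 2 then EB.B ⟨0, h1⟩
        else if l = 3 then EB.A ⟨0, h1⟩
        else EB.X ⟨n, h2⟩

variable {k : Type*} [Field k]

theorem xiCocycle_eq (h1 : 1 ≤ n) (h2 : n < g) (m : ℕ) (w : Fin (m+1) → EB g n) (u : EB g n) :
    xiCocycle (k := k) h1 h2 m w u =
      (if (w = fun l : Fin (m+1) => tpl h1 h2 true (l : ℕ)) ∧ u = X1 h1 h2 then 1 else 0)
      + (if (w = fun l : Fin (m+1) => tpl h1 h2 false (l : ℕ)) ∧ u = X1 h1 h2 then 1 else 0) := rfl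

/-- Characterization of nonzero products. -/
theorem mul_eq_some_cases {hng : n ≤ g} {x y z : EB g n} (h : EB.mul hng x y = some z) :
    (x = EB.e z.left ∧ y = z)
    ∨ ((∀ j, x ≠ EB.e j) ∧ y = EB.e z.right ∧ x = z)
    ∨ (∃ i, x = EB.A i ∧ y = EB.B i ∧ z = EB.Y i)
    ∨ (∃ i, x = EB.B i ∧ y = EB.A i ∧ z = EB.X (Fin.castLE hng i)) := by
  cases x <;> cases y <;> simp_all [EB.mul, EB.left, EB.right] <;>
    first
      | (split at h <;> simp_all) <;> aesop
      | aesop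
  all_goals (revert h; split_ifs <;> intro h <;> simp_all)

theorem mul_e_left (hng : n ≤ g) (j : Fin (n+1)) (y : EB g n) (h : y.left = j) :
    EB.mul hng (EB.e j) y = some y := by
  simp [EB.mul, h]

theorem mul_e_right (hng : n ≤ g) (j : Fin (n+1)) (x : EB g n) (hx : ∀ j', x ≠ EB.e j')
    (h : x.right = j) : EB.mul hng x (EB.e j) = some x := by
  cases x <;> simp_all [EB.mul, EB.right]

end XiProof
namespace XiProof
open EB
variable {g n : ℕ}

theorem tpl_ne_e (h1 : 1 ≤ n) (h2 : n < g) (ε : Bool) (l : ℕ) (j : Fin (n+1)) :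
    tpl h1 h2 ε l ≠ EB.e j := by
  rcases l with _|_|_|_|l <;> cases ε <;> simp [tpl]

theorem tpl_comp (h1 : 1 ≤ n) (h2 : n < g) (ε : Bool) (l : ℕ) :
    (tpl h1 h2 ε l).right = (tpl h1 h2 ε (l+1)).left := by
  rcases l with _|_|_|_|l <;> cases ε <;> simp [tpl, EB.left, EB.right]

theorem tpl_ge_four (h1 : 1 ≤ n) (h2 : n < g) (ε : Bool) (l : ℕ) (hl : 4 ≤ l) :
    tpl h1 h2 ε l = EB.X ⟨n, h2⟩ := by
  rcases l with _|_|_|_|l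
  · omega
  · omega
  · omega
  · omega
  · cases ε <;> simp [tpl]

theorem tpl_left_zero (h1 : 1 ≤ n) (h2 : n < g) (ε : Bool) :
    (tpl h1 h2 ε 0).left = 0 := by cases ε <;> rfl

theorem tpl_eq_Y (h1 : 1 ≤ n) (h2 : n < g) {ε : Bool} {l : ℕ} {i : Fin n}
    (h : tpl h1 h2 ε l = EB.Y i) : ε = true ∧ l = 2 ∧ i = ⟨0, h1⟩ := by
  rcases l with _|_|_|_|l <;> cases ε <;> simp_all [tpl]

theorem tpl_eq_X_castLE (h1 : 1 ≤ n) (h2 : n < g) {ε : Bool} {l : ℕ} {i : Fin n}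
    (h : tpl h1 h2 ε l = EB.X (Fin.castLE h2.le i)) : ε = false ∧ l = 1 ∧ i = ⟨0, h1⟩ := by
  rcases l with _|_|_|_|l <;> cases ε <;>
      simp_all [tpl, Fin.ext_iff] <;> omega

end XiProof
namespace XiProof
open EB
variable {g n : ℕ}

/-- Totalized access to the tuple `w`. -/
def Wf (m : ℕ) (w : Fin (m + 2) → EB g n) (q : ℕ) : EB g n :=
  if h : q < m + 2 then w ⟨q, h⟩ else EB.e 0

theorem Wf_lt {m : ℕ} (w : Fin (m + 2) → EB g n) {q : ℕ} (h : q < m + 2) :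
    Wf m w q = w ⟨q, h⟩ := dif_pos h

section Events

variable (h1 : 1 ≤ n) (h2 : n < g) {m : ℕ} (w : Fin (m + 2) → EB g n) (u : EB g n)

/-- Left boundary event (the first sum of `hdelta` contributes). -/
def EvL (ε : Bool) : Prop :=
  Wf m w 0 = EB.e 0 ∧ u = X1 h1 h2 ∧ ∀ l, l < m + 1 → Wf m w (l + 1) = tpl h1 h2 ε l

/-- Middle event at position `p` (the contraction at `p` equals template `ε`). -/
def EvM (ε : Bool) (p : ℕ) : Prop :=
  EB.mul h2.le (Wf m w p) (Wf m w (p + 1)) = some (tpl h1 h2 ε p) ∧ u = X1 h1 h2 ∧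
    ∀ l, l < m + 1 → (l < p → Wf m w l = tpl h1 h2 ε l) ∧ (p < l → Wf m w (l + 1) = tpl h1 h2 ε l)

/-- Right boundary event (the last sum of `hdelta` contributes). -/
def EvR (ε : Bool) : Prop :=
  Wf m w (m + 1) = EB.e 0 ∧ u = X1 h1 h2 ∧ ∀ l, l < m + 1 → Wf m w l = tpl h1 h2 ε l

/-- All events, indexed by `q ∈ [0, m+2]` (event `q` is the contraction event at
position `q - 1`, with boundary conventions). -/
def Ev (q : ℕ) : Prop :=
  if q = 0 then ∃ ε, EvL h1 h2 w u ε
  else if q ≤ m + 1 then ∃ ε, EvM h1 h2 w u ε (q - 1)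
  else ∃ ε, EvR h1 h2 w u ε

theorem Ev_zero : Ev h1 h2 w u 0 ↔ ∃ ε, EvL h1 h2 w u ε := by simp [Ev]

theorem Ev_succ {p : ℕ} (hp : p ≤ m) : Ev h1 h2 w u (p + 1) ↔ ∃ ε, EvM h1 h2 w u ε p := by
  simp [Ev, Nat.succ_le_succ hp]

theorem Ev_top : Ev h1 h2 w u (m + 2) ↔ ∃ ε, EvR h1 h2 w u ε := by
  have : ¬ (m + 2 ≤ m + 1) := by omega
  simp [Ev, this]

theorem evL_evM {ε : Bool} (h : EvL h1 h2 w u ε) : EvM h1 h2 w u ε 0 := by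
  obtain ⟨h0, hu, ht⟩ := h
  refine ⟨?_, hu, ?_⟩
  · rw [h0, ht 0 (by omega)]
    exact mul_e_left _ _ _ (tpl_left_zero h1 h2 ε)
  · intro l hl
    exact ⟨by omega, fun hl0 => ht l hl⟩

theorem evR_evM (hm : 4 ≤ m) {ε : Bool} (h : EvR h1 h2 w u ε) : EvM h1 h2 w u ε m := by
  obtain ⟨h0, hu, ht⟩ := h
  refine ⟨?_, hu, fun l hl => ⟨fun _ => ht l hl, by omega⟩⟩
  · rw [h0, ht m (by omega)]
    refine mul_e_right _ _ _ (tpl_ne_e h1 h2 ε m) ?_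
    rw [tpl_ge_four h1 h2 ε m hm]
    rfl

end Events

end XiProof
namespace XiProof
open EB
variable {g n : ℕ}

section Key

variable (h1 : 1 ≤ n) (h2 : n < g) {m : ℕ} (w : Fin (m + 2) → EB g n) (u : EB g n)

theorem key (hm : 4 ≤ m) {p : ℕ} (hp : p ≤ m) (h : Ev h1 h2 w u (p + 1)) :
    (Ev h1 h2 w u p ∨ Ev h1 h2 w u (p + 2)) ∧
      ¬(Ev h1 h2 w u p ∧ Ev h1 h2 w u (p + 2)) := by
  obtain ⟨ε, hmul, hu, hco⟩ := (Ev_succ h1 h2 w u hp).mp h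
  rcases mul_eq_some_cases hmul with ⟨hx, hy⟩ | ⟨hxe, hy, hx⟩ | ⟨i, hx, hy, hz⟩ | ⟨i, hx, hy, hz⟩
  · -- shape (i) : `w p` is an idempotent, pairs to the left
    have hR : ¬ Ev h1 h2 w u (p + 2) := by
      intro hR
      by_cases hpm : p = m
      · subst p
        obtain ⟨ε', _, _, ht'⟩ := (Ev_top h1 h2 w u).mp hR
        have ha := ht' m (by omega)
        rw [hx] at ha
        exact tpl_ne_e h1 h2 ε' m _ ha.symm
      · obtain ⟨ε', _, _, hco'⟩ := (Ev_succ h1 h2 w u (show p + 1 ≤ m by omega)).mp hR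
        have := (hco' p (by omega)).1 (by omega)
        rw [hx] at this
        exact tpl_ne_e h1 h2 ε' p _ this.symm
    refine ⟨Or.inl ?_, fun hc => hR hc.2⟩
    rcases Nat.eq_zero_or_pos p with rfl | hp1
    · refine (Ev_zero h1 h2 w u).mpr ⟨ε, ?_, hu, ?_⟩
      · rw [hx, tpl_left_zero]
      · intro l hl
        rcases l with _ | l'
        · exact hy
        · exact (hco (l' + 1) hl).2 (by omega)
    · obtain ⟨p', rfl⟩ : ∃ p', p = p' + 1 := ⟨p - 1, by omega⟩
      refine (Ev_succ h1 h2 w u (show p' ≤ m by omega)).mpr ⟨ε, ?_, hu, ?_⟩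
      · have hwp' : Wf m w p' = tpl h1 h2 ε p' := (hco p' (by omega)).1 (by omega)
        rw [hwp', hx, ← tpl_comp h1 h2 ε p']
        exact mul_e_right _ _ _ (tpl_ne_e h1 h2 ε p') rfl
      · intro l hl
        refine ⟨fun hlt => (hco l hl).1 (by omega), fun hgt => ?_⟩
        by_cases hl2 : l = p' + 1
        · subst hl2; exact hy
        · exact (hco l hl).2 (by omega)
  · -- shape (ii) : `w (p+1)` is an idempotent, pairs to the right
    have hL : ¬ Ev h1 h2 w u p := by
      intro hL
      rcases Nat.eq_zero_or_pos p with rfl | hp1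
      · obtain ⟨ε', h0', _, _⟩ := (Ev_zero h1 h2 w u).mp hL
        exact tpl_ne_e h1 h2 ε 0 0 (hx ▸ h0')
      · obtain ⟨p', rfl⟩ : ∃ p', p = p' + 1 := ⟨p - 1, by omega⟩
        obtain ⟨ε', _, _, hco'⟩ := (Ev_succ h1 h2 w u (show p' ≤ m by omega)).mp hL
        have := (hco' (p' + 1) (by omega)).2 (by omega)
        rw [hy] at this
        exact tpl_ne_e h1 h2 ε' (p' + 1) _ this.symm
    refine ⟨Or.inr ?_, fun hc => hL hc.1⟩
    by_cases hpm : p = m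
    · subst p
      refine (Ev_top h1 h2 w u).mpr ⟨ε, ?_, hu, ?_⟩
      · rw [hy, tpl_ge_four h1 h2 ε m hm]; rfl
      · intro l hl
        by_cases hlm : l = m
        · subst hlm; exact hx
        · exact (hco l hl).1 (by omega)
    · refine (Ev_succ h1 h2 w u (show p + 1 ≤ m by omega)).mpr ⟨ε, ?_, hu, ?_⟩
      · have hw2 : Wf m w (p + 2) = tpl h1 h2 ε (p + 1) := (hco (p + 1) (by omega)).2 (by omega)
        rw [hy, hw2, tpl_comp h1 h2 ε p]
        exact mul_e_left _ _ _ rfl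
      · intro l hl
        refine ⟨fun hlt => ?_, fun hgt => (hco l hl).2 (by omega)⟩
        by_cases hlp : l = p
        · subst hlp; exact hx
        · exact (hco l hl).1 (by omega)
  · -- shape (iii) : `A₁ · B₁ = Y₁`, so `ε = true`, `p = 2`; pairs to the left
    obtain ⟨hε, hp2, hi⟩ := tpl_eq_Y h1 h2 hz
    subst hε; subst hp2; subst hi
    have hR : ¬ Ev h1 h2 w u (2 + 2) := by
      intro hR
      obtain ⟨ε', hmul', _, _⟩ := (Ev_succ h1 h2 w u (show 3 ≤ m by omega)).mp hR
      have h3 : Wf m w 3 = EB.B ⟨0, h1⟩ := hy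
      have h4 : Wf m w 4 = tpl h1 h2 true 3 := (hco 3 (by omega)).2 (by omega)
      rw [h3, h4] at hmul'
      cases ε' <;> simp [EB.mul, tpl] at hmul'
    refine ⟨Or.inl ?_, fun hc => hR hc.2⟩
    refine (Ev_succ h1 h2 w u (show 1 ≤ m by omega)).mpr ⟨false, ?_, hu, ?_⟩
    · have h1w : Wf m w 1 = tpl h1 h2 true 1 := (hco 1 (by omega)).1 (by omega)
      rw [h1w, hx]
      simp [EB.mul, tpl]
    · intro l hl
      constructor
      · intro hl1
        have hl0 : l = 0 := by omega
        subst hl0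
        have := (hco 0 (by omega)).1 (by omega)
        rw [this]; simp [tpl]
      · intro hg1
        rcases l with _ | _ | _ | _ | l'
        · omega
        · omega
        · exact hy
        · have := (hco 3 (by omega)).2 (by omega)
          rw [this]; simp [tpl]
        · have := (hco (l' + 4) hl).2 (by omega)
          rw [this, tpl_ge_four h1 h2 true _ (by omega), tpl_ge_four h1 h2 false _ (by omega)]
  · -- shape (iv) : `B₁ · A₁ = X₁`, so `ε = false`, `p = 1`; pairs to the right
    obtain ⟨hε, hp2, hi⟩ := tpl_eq_X_castLE h1 h2 hz
    subst hε; subst hp2; subst hi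
    have hL : ¬ Ev h1 h2 w u 1 := by
      intro hL
      obtain ⟨ε', hmul', _, _⟩ := (Ev_succ h1 h2 w u (show 0 ≤ m by omega)).mp hL
      have h0 : Wf m w 0 = tpl h1 h2 false 0 := (hco 0 (by omega)).1 (by omega)
      rw [h0, hx] at hmul'
      cases ε' <;> simp [EB.mul, tpl] at hmul'
    refine ⟨Or.inr ?_, fun hc => hL hc.1⟩
    refine (Ev_succ h1 h2 w u (show 2 ≤ m by omega)).mpr ⟨true, ?_, hu, ?_⟩
    · have h3w : Wf m w 3 = tpl h1 h2 false 2 := (hco 2 (by omega)).2 (by omega)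
      rw [hy, h3w]
      simp [EB.mul, tpl]
    · intro l hl
      constructor
      · intro hl2
        rcases l with _ | _ | l'
        · have := (hco 0 (by omega)).1 (by omega)
          rw [this]; simp [tpl]
        · exact hx
        · omega
      · intro hg2
        rcases l with _ | _ | _ | _ | l'
        · omega
        · omega
        · omega
        · have := (hco 3 (by omega)).2 (by omega)
          rw [this]; simp [tpl]
        · have := (hco (l' + 4) hl).2 (by omega)
          rw [this, tpl_ge_four h1 h2 true _ (by omega), tpl_ge_four h1 h2 false _ (by omega)]

end Key
end XiProof
namespace XiProof
open EB
variable {g n : ℕ}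

section Bridges

variable (h1 : 1 ≤ n) (h2 : n < g) {m : ℕ} (w : Fin (m + 2) → EB g n)

theorem bridge_tail (ε : Bool) :
    ((fun j : Fin (m+1) => w j.succ) = fun l : Fin (m+1) => tpl h1 h2 ε (l : ℕ)) ↔
      (∀ l, l < m + 1 → Wf m w (l + 1) = tpl h1 h2 ε l) := by
  rw [funext_iff, Fin.forall_iff]
  constructor
  · intro H l hl
    rw [Wf_lt _ (by omega)]
    exact H l hl
  · intro H l hl
    have := H l hl
    rw [Wf_lt _ (by omega)] at this
    exact this

theorem bridge_init (ε : Bool) :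
    ((fun j : Fin (m+1) => w j.castSucc) = fun l : Fin (m+1) => tpl h1 h2 ε (l : ℕ)) ↔
      (∀ l, l < m + 1 → Wf m w l = tpl h1 h2 ε l) := by
  rw [funext_iff, Fin.forall_iff]
  constructor
  · intro H l hl
    rw [Wf_lt _ (by omega)]
    exact H l hl
  · intro H l hl
    have := H l hl
    rw [Wf_lt _ (by omega)] at this
    exact this

theorem bridge_contr (p : Fin (m+1)) (v : EB g n) (ε : Bool) :
    ((fun l : Fin (m+1) => if (l : ℕ) < (p : ℕ) then w l.castSucc
        else if (l : ℕ) = (p : ℕ) then v else w l.succ)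
      = fun l : Fin (m+1) => tpl h1 h2 ε (l : ℕ)) ↔
      (v = tpl h1 h2 ε (p : ℕ) ∧ ∀ l, l < m + 1 →
        (l < (p : ℕ) → Wf m w l = tpl h1 h2 ε l) ∧
        ((p : ℕ) < l → Wf m w (l + 1) = tpl h1 h2 ε l)) := by
  rw [funext_iff, Fin.forall_iff]
  constructor
  · intro H
    refine ⟨?_, fun l hl => ⟨fun hlt => ?_, fun hgt => ?_⟩⟩
    · have := H (p : ℕ) (by omega)
      simp only [Fin.val_mk] at this
      simpa using this
    · have := H l hl
      simp only [Fin.val_mk] at this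
      rw [if_pos hlt] at this
      rw [Wf_lt _ (by omega)]
      exact this
    · have := H l hl
      simp only [Fin.val_mk] at this
      rw [if_neg (by omega : ¬ (l < (p : ℕ))), if_neg (by omega : ¬ (l = (p : ℕ)))] at this
      rw [Wf_lt _ (by omega)]
      exact this
  · rintro ⟨hv, H⟩ l hl
    simp only [Fin.val_mk]
    rcases lt_trichotomy l (p : ℕ) with hc | hc | hc
    · rw [if_pos hc]
      have := (H l hl).1 hc
      rw [Wf_lt _ (by omega)] at this
      exact this
    · rw [if_neg (by omega), if_pos hc]
      exact hc ▸ hv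
    · rw [if_neg (by omega), if_neg (by omega)]
      have := (H l hl).2 hc
      rw [Wf_lt _ (by omega)] at this
      exact this

theorem Wf_zero : Wf m w 0 = w 0 := by
  rw [Wf_lt _ (by omega)]
  congr 1

theorem Wf_last : Wf m w (m + 1) = w (Fin.last (m + 1)) := by
  rw [Wf_lt _ (by omega)]
  rfl

theorem Wf_castSucc (p : Fin (m + 1)) : Wf m w (p : ℕ) = w p.castSucc := by
  rw [Wf_lt _ (by omega)]
  congr 1

theorem Wf_succ (p : Fin (m + 1)) : Wf m w ((p : ℕ) + 1) = w p.succ := by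
  rw [Wf_lt _ (by omega)]
  congr 1

end Bridges

theorem tplF_ne {m : ℕ} (h1 : 1 ≤ n) (h2 : n < g) (hm : 1 ≤ m) :
    (fun l : Fin (m+1) => tpl h1 h2 true (l : ℕ)) ≠
      (fun l : Fin (m+1) => tpl h1 h2 false (l : ℕ)) := by
  intro h
  have := congrFun h ⟨1, by omega⟩
  simp [tpl] at this

theorem ind_or {k : Type*} [Field k] {P Q : Prop} [Decidable P] [Decidable Q] (h : ¬ (P ∧ Q)) :
    (if P then (1:k) else 0) + (if Q then 1 else 0) = if P ∨ Q then 1 else 0 := by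
  by_cases hP : P <;> by_cases hQ : Q <;> simp_all

end XiProof
namespace XiProof
open EB
open scoped Classical
variable {g n : ℕ} {k : Type*} [Field k]

section Slemmas

variable (h1 : 1 ≤ n) (h2 : n < g) {m : ℕ}

theorem S1 (hm : 1 ≤ m) (w : Fin (m + 2) → EB g n) (u : EB g n) :
    (∑ v : EB g n, if EB.mul h2.le (w 0) v = some u then
        xiCocycle (k := k) h1 h2 m (fun j => w j.succ) v else 0)
      = if Ev h1 h2 w u 0 then 1 else 0 := by
  have hside : ∀ v : EB g n, v ≠ X1 h1 h2 →
      (if EB.mul h2.le (w 0) v = some u then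
        xiCocycle (k := k) h1 h2 m (fun j => w j.succ) v else 0) = 0 := by
    intro v hv
    rw [xiCocycle_eq]
    simp [hv]
  rw [Fintype.sum_eq_single _ hside]
  by_cases hc : EB.mul h2.le (w 0) (X1 h1 h2) = some u
  · rw [if_pos hc, xiCocycle_eq]
    have h0u : w 0 = EB.e 0 ∧ u = X1 h1 h2 := by
      rcases mul_eq_some_cases hc with ⟨ha, hb⟩ | ⟨ha, hb, _⟩ | ⟨i, _, hb, _⟩ | ⟨i, _, hb, _⟩
      · refine ⟨?_, hb.symm⟩
        rw [ha, ← hb]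
        rfl
      · exact absurd hb (by simp [X1])
      · exact absurd hb (by simp [X1])
      · exact absurd hb (by simp [X1])
    obtain ⟨hw0, hu⟩ := h0u
    rw [ind_or (by rintro ⟨⟨hA, -⟩, ⟨hB, -⟩⟩; exact tplF_ne h1 h2 hm (hA.symm.trans hB))]
    apply if_congr ?_ rfl rfl
    rw [Ev_zero]
    constructor
    · rintro (⟨hA, -⟩ | ⟨hA, -⟩)
      · exact ⟨true, by rw [Wf_zero]; exact hw0, hu, (bridge_tail h1 h2 w true).mp hA⟩
      · exact ⟨false, by rw [Wf_zero]; exact hw0, hu, (bridge_tail h1 h2 w false).mp hA⟩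
    · rintro ⟨ε, -, -, ht⟩
      cases ε
      · exact Or.inr ⟨(bridge_tail h1 h2 w false).mpr ht, rfl⟩
      · exact Or.inl ⟨(bridge_tail h1 h2 w true).mpr ht, rfl⟩
  · rw [if_neg hc, if_neg ?_]
    intro hE
    obtain ⟨ε, h0, hu, -⟩ := (Ev_zero h1 h2 w u).mp hE
    rw [Wf_zero] at h0
    apply hc
    rw [h0, hu]
    exact mul_e_left _ _ _ rfl

theorem S3 (hm : 1 ≤ m) (w : Fin (m + 2) → EB g n) (u : EB g n) :
    (∑ v : EB g n, if EB.mul h2.le v (w (Fin.last (m + 1))) = some u then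
        xiCocycle (k := k) h1 h2 m (fun j => w j.castSucc) v else 0)
      = if Ev h1 h2 w u (m + 2) then 1 else 0 := by
  have hside : ∀ v : EB g n, v ≠ X1 h1 h2 →
      (if EB.mul h2.le v (w (Fin.last (m + 1))) = some u then
        xiCocycle (k := k) h1 h2 m (fun j => w j.castSucc) v else 0) = 0 := by
    intro v hv
    rw [xiCocycle_eq]
    simp [hv]
  rw [Fintype.sum_eq_single _ hside]
  by_cases hc : EB.mul h2.le (X1 h1 h2) (w (Fin.last (m + 1))) = some u
  · rw [if_pos hc, xiCocycle_eq]
    have h0u : w (Fin.last (m + 1)) = EB.e 0 ∧ u = X1 h1 h2 := by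
      rcases mul_eq_some_cases hc with ⟨ha, hb⟩ | ⟨ha, hb, hcz⟩ | ⟨i, ha, _, _⟩ | ⟨i, ha, _, _⟩
      · exact absurd ha (by simp [X1])
      · refine ⟨?_, hcz.symm⟩
        rw [hb, ← hcz]
        rfl
      · exact absurd ha (by simp [X1])
      · exact absurd ha (by simp [X1])
    obtain ⟨hwl, hu⟩ := h0u
    rw [ind_or (by rintro ⟨⟨hA, -⟩, ⟨hB, -⟩⟩; exact tplF_ne h1 h2 hm (hA.symm.trans hB))]
    apply if_congr ?_ rfl rfl
    rw [Ev_top]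
    constructor
    · rintro (⟨hA, -⟩ | ⟨hA, -⟩)
      · exact ⟨true, by rw [Wf_last]; exact hwl, hu, (bridge_init h1 h2 w true).mp hA⟩
      · exact ⟨false, by rw [Wf_last]; exact hwl, hu, (bridge_init h1 h2 w false).mp hA⟩
    · rintro ⟨ε, -, -, ht⟩
      cases ε
      · exact Or.inr ⟨(bridge_init h1 h2 w false).mpr ht, rfl⟩
      · exact Or.inl ⟨(bridge_init h1 h2 w true).mpr ht, rfl⟩
  · rw [if_neg hc, if_neg ?_]
    intro hE
    obtain ⟨ε, h0, hu, -⟩ := (Ev_top h1 h2 w u).mp hE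
    rw [Wf_last] at h0
    apply hc
    rw [h0, hu]
    exact mul_e_right _ _ _ (by simp [X1]) rfl

theorem S2 (hm : 1 ≤ m) (w : Fin (m + 2) → EB g n) (u : EB g n) (p : Fin (m + 1)) :
    ((EB.mul h2.le (w p.castSucc) (w p.succ)).elim 0 (fun v =>
        xiCocycle (k := k) h1 h2 m (fun l => if (l : ℕ) < (p : ℕ) then w l.castSucc
          else if (l : ℕ) = (p : ℕ) then v else w l.succ) u)
      : k) = if Ev h1 h2 w u ((p : ℕ) + 1) then 1 else 0 := by
  have hple : (p : ℕ) ≤ m := by omega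
  rcases hmm : EB.mul h2.le (w p.castSucc) (w p.succ) with _ | v
  · rw [if_neg ?_]
    · rfl
    · intro hE
      obtain ⟨ε, hmul, -, -⟩ := (Ev_succ h1 h2 w u hple).mp hE
      rw [Wf_castSucc w p, Wf_succ w p, hmm] at hmul
      simp at hmul
  · show xiCocycle (k := k) h1 h2 m _ u = _
    rw [xiCocycle_eq]
    rw [ind_or (by rintro ⟨⟨hA, -⟩, ⟨hB, -⟩⟩; exact tplF_ne h1 h2 hm (hA.symm.trans hB))]
    apply if_congr ?_ rfl rfl
    rw [Ev_succ h1 h2 w u hple]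
    constructor
    · rintro (⟨hA, hu⟩ | ⟨hA, hu⟩)
      · obtain ⟨hv, hcol⟩ := (bridge_contr h1 h2 w p v true).mp hA
        exact ⟨true, by rw [Wf_castSucc w p, Wf_succ w p, hmm, hv], hu, hcol⟩
      · obtain ⟨hv, hcol⟩ := (bridge_contr h1 h2 w p v false).mp hA
        exact ⟨false, by rw [Wf_castSucc w p, Wf_succ w p, hmm, hv], hu, hcol⟩
    · rintro ⟨ε, hmul, hu, hco⟩
      rw [Wf_castSucc w p, Wf_succ w p, hmm] at hmul
      have hv : v = tpl h1 h2 ε (p : ℕ) := Option.some.inj hmul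
      cases ε
      · exact Or.inr ⟨(bridge_contr h1 h2 w p v false).mpr ⟨hv, hco⟩, hu⟩
      · exact Or.inl ⟨(bridge_contr h1 h2 w p v true).mpr ⟨hv, hco⟩, hu⟩

end Slemmas

end XiProof
namespace XiProof
open EB
open scoped Classical
variable {g n : ℕ} {k : Type*} [Field k]

theorem cocycle_xi (h1 : 1 ≤ n) (h2 : n < g) (m : ℕ) (hm : 4 ≤ m) :
    hdelta k h2.le (m + 1) (xiCocycle (k := k) h1 h2 m) = 0 := by
  funext w u
  have hm1 : 1 ≤ m := by omega
  show (∑ v : EB g n, if EB.mul h2.le (w 0) v = some u then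
        xiCocycle (k := k) h1 h2 m (fun j => w j.succ) v else 0)
      + (∑ p : Fin (m + 1), (-1 : k) ^ ((p : ℕ) + 1) *
          ((EB.mul h2.le (w p.castSucc) (w p.succ)).elim 0 (fun v =>
            xiCocycle (k := k) h1 h2 m (fun l => if (l : ℕ) < (p : ℕ) then w l.castSucc
              else if (l : ℕ) = (p : ℕ) then v else w l.succ) u)))
      + (-1 : k) ^ (m + 1 + 1) *
          (∑ v : EB g n, if EB.mul h2.le v (w (Fin.last (m + 1))) = some u then
            xiCocycle (k := k) h1 h2 m (fun j => w j.castSucc) v else 0) = 0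
  rw [S1 h1 h2 hm1 w u, S3 h1 h2 hm1 w u]
  rw [Finset.sum_congr rfl (fun (p : Fin (m+1)) (_ : p ∈ (Finset.univ : Finset (Fin (m+1)))) =>
    congrArg (fun z => (-1 : k) ^ ((p : ℕ) + 1) * z) (S2 h1 h2 hm1 w u p))]
  have key' : ∀ p : ℕ, p ≤ m → (if Ev h1 h2 w u (p + 1) then (1 : k) else 0) =
      (if Ev h1 h2 w u p ∧ Ev h1 h2 w u (p + 1) then 1 else 0)
      + (if Ev h1 h2 w u (p + 1) ∧ Ev h1 h2 w u (p + 2) then 1 else 0) := by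
    intro p hp
    by_cases hE : Ev h1 h2 w u (p + 1)
    · obtain ⟨hor, hnand⟩ := key h1 h2 w u hm hp hE
      rw [if_pos hE]
      rcases hor with h | h
      · rw [if_pos ⟨h, hE⟩, if_neg (fun hx => hnand ⟨h, hx.2⟩)]; ring
      · rw [if_neg (fun hx => hnand ⟨hx.1, h⟩), if_pos ⟨hE, h⟩]; ring
    · rw [if_neg hE, if_neg (fun hx => hE hx.2), if_neg (fun hx => hE hx.1)]; ring
  have hA : (if Ev h1 h2 w u 0 then (1 : k) else 0)
      = (if Ev h1 h2 w u 0 ∧ Ev h1 h2 w u 1 then 1 else 0) := by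
    by_cases h0 : Ev h1 h2 w u 0
    · obtain ⟨ε, hL⟩ := (Ev_zero h1 h2 w u).mp h0
      rw [if_pos h0, if_pos ⟨h0, (Ev_succ h1 h2 w u (Nat.zero_le m)).mpr ⟨ε, evL_evM h1 h2 w u hL⟩⟩]
    · rw [if_neg h0, if_neg (fun hx => h0 hx.1)]
  have hB : (if Ev h1 h2 w u (m + 2) then (1 : k) else 0)
      = (if Ev h1 h2 w u (m + 1) ∧ Ev h1 h2 w u (m + 2) then 1 else 0) := by
    by_cases h0 : Ev h1 h2 w u (m + 2)
    · obtain ⟨ε, hR⟩ := (Ev_top h1 h2 w u).mp h0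
      rw [if_pos h0, if_pos ⟨(Ev_succ h1 h2 w u (le_refl m)).mpr ⟨ε, evR_evM h1 h2 w u hm hR⟩, h0⟩]
    · rw [if_neg h0, if_neg (fun hx => h0 hx.2)]
  set G : ℕ → k := fun q =>
    (-1 : k) ^ q * (if Ev h1 h2 w u q ∧ Ev h1 h2 w u (q + 1) then 1 else 0) with hGdef
  have hmid : (∑ p : Fin (m + 1), (-1 : k) ^ ((p : ℕ) + 1) *
      (if Ev h1 h2 w u ((p : ℕ) + 1) then 1 else 0)) = G (m + 1) - G 0 := by
    rw [Fin.sum_univ_eq_sum_range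
      (fun q => (-1 : k) ^ (q + 1) * (if Ev h1 h2 w u (q + 1) then 1 else 0)) (m + 1)]
    rw [← Finset.sum_range_sub G (m + 1)]
    refine Finset.sum_congr rfl fun p hp => ?_
    have hple : p ≤ m := by
      simp only [Finset.mem_range] at hp
      omega
    rw [key' p hple]
    simp only [hGdef, pow_succ]
    ring
  rw [hA, hB, hmid]
  simp only [hGdef, pow_succ, pow_zero]
  ring

end XiProof
namespace XiProof
open EB
open scoped Classical
variable {g n : ℕ} {k : Type*} [Field k]

theorem homog_xi (h1 : 1 ≤ n) (h2 : n < g) (m : ℕ) (hm : 4 ≤ m) :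
    IsHomog k (m + 1) (2 - ((m : ℤ) + 1)) (xiCocycle (k := k) h1 h2 m) := by
  intro w u hne
  rw [xiCocycle_eq] at hne
  have hmain : (∃ ε : Bool, w = fun l : Fin (m+1) => tpl h1 h2 ε (l : ℕ)) ∧ u = X1 h1 h2 := by
    by_cases hA : (w = fun l : Fin (m+1) => tpl h1 h2 true (l : ℕ)) ∧ u = X1 h1 h2
    · exact ⟨⟨true, hA.1⟩, hA.2⟩
    by_cases hB : (w = fun l : Fin (m+1) => tpl h1 h2 false (l : ℕ)) ∧ u = X1 h1 h2
    · exact ⟨⟨false, hB.1⟩, hB.2⟩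
    · rw [if_neg hA, if_neg hB] at hne
      simp at hne
  obtain ⟨⟨ε, hw⟩, hu⟩ := hmain
  subst hw
  subst hu
  have hdeg : ∀ l : Fin (m+1), (EB.deg (tpl h1 h2 ε ((l : ℕ))) : ℤ) =
      if (l : ℕ) = 3 then 0 else 1 := by
    intro l
    rcases l with ⟨l, hl⟩
    simp only [Fin.val_mk]
    rcases l with _|_|_|_|l' <;> cases ε <;> simp [tpl, EB.deg]
  rw [Finset.sum_congr rfl (fun l (_ : l ∈ Finset.univ) => hdeg l)]
  have hsum : (∑ l : Fin (m+1), if (l : ℕ) = 3 then (0:ℤ) else 1) = m := by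
    have h3 : (3 : ℕ) < m + 1 := by omega
    calc (∑ l : Fin (m+1), if (l : ℕ) = 3 then (0:ℤ) else 1)
        = ∑ l : Fin (m+1), (1 - if l = (⟨3, h3⟩ : Fin (m+1)) then (1:ℤ) else 0) := by
          refine Finset.sum_congr rfl fun l _ => ?_
          by_cases hc : (l : ℕ) = 3
          · rw [if_pos hc, if_pos (Fin.ext hc)]; ring
          · rw [if_neg hc, if_neg (fun he => hc (by rw [he]))]; ring
      _ = (m : ℤ) := by
          rw [Finset.sum_sub_distrib, Finset.sum_const,
            Finset.sum_ite_eq' Finset.univ (⟨3, h3⟩ : Fin (m+1)) (fun _ => (1:ℤ))]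
          simp
  rw [hsum]
  simp [X1, EB.deg]
  ring

theorem not_cobound (h1 : 1 ≤ n) (h2 : n < g) (m : ℕ) (hm : 4 ≤ m) :
    ∀ b : HCochain k g n m, IsHomog k m (2 - ((m : ℤ) + 1)) b →
      hdelta k h2.le m b ≠ xiCocycle (k := k) h1 h2 m := by
  intro b _ heq
  have h3 := congrFun (congrFun heq (fun l : Fin (m+1) => tpl h1 h2 true (l : ℕ))) (X1 h1 h2)
  rw [xiCocycle_eq, if_pos ⟨rfl, rfl⟩,
    if_neg (fun hx => tplF_ne h1 h2 (by omega) hx.1)] at h3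
  have hXv : ∀ v : EB g n, EB.mul h2.le (EB.X ⟨n, h2⟩) v ≠ some (X1 h1 h2) := by
    intro v
    cases v <;> simp [EB.mul, X1, Fin.ext_iff] <;> try omega
  have hvX : ∀ v : EB g n, EB.mul h2.le v (EB.X ⟨n, h2⟩) ≠ some (X1 h1 h2) := by
    intro v
    cases v <;> simp [EB.mul, EB.left, X1, Fin.ext_iff] <;> try omega
  have hmulN : ∀ q : ℕ, EB.mul h2.le (tpl h1 h2 true q) (tpl h1 h2 true (q+1)) = none := by
    intro q
    rcases q with _|_|_|_|q <;> simp [tpl, EB.mul]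
  have hL : hdelta k h2.le m b (fun l : Fin (m+1) => tpl h1 h2 true (l : ℕ)) (X1 h1 h2) = 0 := by
    show (∑ v : EB g n, if EB.mul h2.le (tpl h1 h2 true ((0 : Fin (m+1)) : ℕ)) v = some (X1 h1 h2) then
          b (fun j => tpl h1 h2 true ((j.succ : Fin (m+1)) : ℕ)) v else 0)
        + (∑ p : Fin m, (-1 : k) ^ ((p : ℕ) + 1) *
            ((EB.mul h2.le (tpl h1 h2 true ((p.castSucc : Fin (m+1)) : ℕ))
                (tpl h1 h2 true ((p.succ : Fin (m+1)) : ℕ))).elim 0 (fun v =>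
              b (fun l => if (l : ℕ) < (p : ℕ) then tpl h1 h2 true ((l.castSucc : Fin (m+1)) : ℕ)
                else if (l : ℕ) = (p : ℕ) then v
                else tpl h1 h2 true ((l.succ : Fin (m+1)) : ℕ)) (X1 h1 h2))))
        + (-1 : k) ^ (m + 1) *
            (∑ v : EB g n, if EB.mul h2.le v (tpl h1 h2 true ((Fin.last m : Fin (m+1)) : ℕ)) = some (X1 h1 h2) then
              b (fun j => tpl h1 h2 true ((j.castSucc : Fin (m+1)) : ℕ)) v else 0) = 0
    have e1 : (∑ v : EB g n, if EB.mul h2.le (tpl h1 h2 true ((0 : Fin (m+1)) : ℕ)) v = some (X1 h1 h2) then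
          b (fun j => tpl h1 h2 true ((j.succ : Fin (m+1)) : ℕ)) v else 0) = 0 := by
      refine Finset.sum_eq_zero fun v _ => ?_
      rw [if_neg]
      simp only [Fin.val_zero]
      have : tpl h1 h2 true 0 = EB.X ⟨n, h2⟩ := rfl
      rw [this]
      exact hXv v
    have e3 : (∑ v : EB g n, if EB.mul h2.le v (tpl h1 h2 true ((Fin.last m : Fin (m+1)) : ℕ)) = some (X1 h1 h2) then
          b (fun j => tpl h1 h2 true ((j.castSucc : Fin (m+1)) : ℕ)) v else 0) = 0 := by
      refine Finset.sum_eq_zero fun v _ => ?_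
      rw [if_neg]
      rw [show ((Fin.last m : Fin (m+1)) : ℕ) = m from rfl, tpl_ge_four h1 h2 true m hm]
      exact hvX v
    have e2 : (∑ p : Fin m, (-1 : k) ^ ((p : ℕ) + 1) *
            ((EB.mul h2.le (tpl h1 h2 true ((p.castSucc : Fin (m+1)) : ℕ))
                (tpl h1 h2 true ((p.succ : Fin (m+1)) : ℕ))).elim 0 (fun v =>
              b (fun l => if (l : ℕ) < (p : ℕ) then tpl h1 h2 true ((l.castSucc : Fin (m+1)) : ℕ)
                else if (l : ℕ) = (p : ℕ) then v
                else tpl h1 h2 true ((l.succ : Fin (m+1)) : ℕ)) (X1 h1 h2)))) = 0 := by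
      refine Finset.sum_eq_zero fun p _ => ?_
      rw [show ((p.castSucc : Fin (m+1)) : ℕ) = (p : ℕ) from rfl,
        show ((p.succ : Fin (m+1)) : ℕ) = (p : ℕ) + 1 from rfl, hmulN (p : ℕ)]
      simp
    rw [e1, e2, e3]
    ring
  rw [hL] at h3
  simp at h3

end XiProof
/-- The computation proving Theorem 1.1(ii) of the paper: for `1 ≤ n < g` and
`i = m + 1 ≥ 5`, the cochain `c = [X B₁ Y₁ A₁ X^{i-4}]^* X₁ + [X X₁ B₁ A₁ X^{i-4}]^* X₁`
(with `X = X_{n+1}`) lies in `Cⁱ(E_{g,n})_{2-i}`, is a cocycle, and is not a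
coboundary of a homogeneous cochain. -/
theorem stmt_5 (k : Type*) [Field k] (g n : ℕ) (h1 : 1 ≤ n) (h2 : n < g)
    (m : ℕ) (hm : 4 ≤ m) :
    IsHomog k (m + 1) (2 - ((m : ℤ) + 1)) (xiCocycle (k := k) h1 h2 m) ∧
    hdelta k h2.le (m + 1) (xiCocycle (k := k) h1 h2 m) = 0 ∧
    ∀ b : HCochain k g n m, IsHomog k m (2 - ((m : ℤ) + 1)) b →
      hdelta k h2.le m b ≠ xiCocycle (k := k) h1 h2 m := by
  exact ⟨XiProof.homog_xi h1 h2 m hm, XiProof.cocycle_xi h1 h2 m hm, XiProof.not_cobound h1 h2 m hm⟩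

end
end

section
/- Let T be a pretriangulated category and let (T', α, β) be a convolution of a complex X_n →^{d_n} X_{n−1} → … → X_1 →^{d_1} X_0 in T. Then (T'[1], (−1)^n α', β[1]) is a convolution of the shifted complex X_n[1] →^{d_n[1]} X_{n−1}[1] → … →^{d_1[1]} X_0[1], where α' : T'[1] → (X_n[1])[n] is the morphism induced by α : T' → X_n[n] under the canonical identification (X_n[n])[1] ≅ (X_n[1])[n]. -/
noncomputable section
open CategoryTheory Category Limits Pretriangulated

variable {C : Type*} [Category C] [Preadditive C] [HasZeroObject C]
  [HasShift C ℤ] [∀ n : ℤ, (CategoryTheory.shiftFunctor C n).Additive] [Pretriangulated C]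

/-- `IsConv n X d T α β` says that `(T, α, β)` is a convolution of the complex
`X n → X (n-1) → … → X 0` (with maps `d i : X (i+1) ⟶ X i`), i.e. it arises from
a left Postnikov diagram.  This is encoded recursively: a convolution of a
single-object complex is (an object isomorphic to) `X 0` itself, and a convolution
of `X (m+1) → … → X 0` is the cofiber `T` of a map `f₀ : T' → X 0`, where
`(T', α', β')` is a convolution of `X (m+1) → … → X 1` and `β' ≫ f₀ = d 0`;
the map `α : T → X (m+1)[m+1]` is the composition of `g₀ : T → T'[1]` with `α'[1]`. -/
def IsConv : (m : ℕ) → (X : ℕ → C) → (∀ i : ℕ, X (i + 1) ⟶ X i) → (T : C) →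
    (T ⟶ (X m)⟦(m : ℤ)⟧) → (X 0 ⟶ T) → Prop
  | 0, X, _, T, α, β =>
      ∃ e : T ≅ X 0, β ≫ e.hom = 𝟙 (X 0) ∧
        α = e.hom ≫ (shiftFunctorZero C ℤ).inv.app (X 0)
  | (m + 1), X, d, T, α, β =>
      ∃ (T' : C) (f₀ : T' ⟶ X 0) (g₀ : T ⟶ T'⟦(1 : ℤ)⟧)
        (α' : T' ⟶ (X (m + 1))⟦(m : ℤ)⟧) (β' : X 1 ⟶ T'),
        Triangle.mk f₀ β g₀ ∈ (distTriang C) ∧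
        β' ≫ f₀ = d 0 ∧
        IsConv m (fun i => X (i + 1)) (fun i => d (i + 1)) T' α' β' ∧
        α = g₀ ≫ α'⟦(1 : ℤ)⟧' ≫
          (shiftFunctorAdd' C (m : ℤ) (1 : ℤ) ((m + 1 : ℕ) : ℤ)
            (by push_cast; ring)).inv.app (X (m + 1))

-- helpers
lemma helper1 (Y : C) :
    ((shiftFunctorZero C ℤ).inv.app Y)⟦(1:ℤ)⟧' ≫ (shiftFunctorComm C (0:ℤ) (1:ℤ)).hom.app Y
      = (shiftFunctorZero C ℤ).inv.app (Y⟦(1:ℤ)⟧) := by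
  have : (shiftFunctorComm C (0:ℤ) (1:ℤ)).hom.app Y = (shiftFunctorComm C (1:ℤ) (0:ℤ)).inv.app Y := by
    rw [← shiftFunctorComm_symm C 1 0]; rfl
  rw [this, ← shiftFunctorZero_inv_app_shift]

lemma helper2 (a b : ℤ) (h : a + 1 = b) (Y : C) :
    ((shiftFunctorComm C a 1).hom.app Y)⟦(1:ℤ)⟧' ≫ (shiftFunctorAdd' C a 1 b h).inv.app (Y⟦(1:ℤ)⟧)
      = ((shiftFunctorAdd' C a 1 b h).inv.app Y)⟦(1:ℤ)⟧' ≫ (shiftFunctorComm C b 1).hom.app Y := by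
  subst h
  have K := shiftFunctorComm_hom_app_comp_shift_shiftFunctorAdd_hom_app (C := C) 1 a 1 Y
  simp only [shiftFunctorComm_eq_refl, Iso.refl_hom, NatTrans.id_app, comp_id] at K
  have ha : (shiftFunctorComm C a 1).hom.app Y = (shiftFunctorComm C 1 a).inv.app Y := by
    rw [← shiftFunctorComm_symm C 1 a]; rfl
  have hb : (shiftFunctorComm C (a+1) 1).hom.app Y = (shiftFunctorComm C 1 (a+1)).inv.app Y := by
    rw [← shiftFunctorComm_symm C 1 (a+1)]; rfl
  rw [ha, hb, shiftFunctorAdd'_eq_shiftFunctorAdd,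
    ← cancel_epi (((shiftFunctorComm C 1 a).hom.app Y)⟦(1:ℤ)⟧'),
    ← cancel_mono ((shiftFunctorComm C 1 (a+1)).hom.app Y)]
  simp only [← Functor.map_comp_assoc, Iso.hom_inv_id_app, Functor.map_id, id_comp, assoc,
    Iso.inv_hom_id_app, comp_id, Functor.comp_obj]
  rw [← cancel_mono (((shiftFunctorAdd C a 1).hom.app Y)⟦(1:ℤ)⟧')]
  simp only [assoc, Iso.inv_hom_id_app, Functor.comp_obj, comp_id]
  simp only [Functor.map_id, id_comp, K, Iso.inv_hom_id_app_assoc, ← Functor.map_comp, assoc,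
    Iso.inv_hom_id_app, Functor.comp_obj]
  simp



/-- An isomorphism whose hom is `-𝟙`. -/
def negIso (Z : C) : Z ≅ Z := ⟨-𝟙 Z, -𝟙 Z, by simp, by simp⟩

lemma shift1_distinguished (T : Triangle C) (hT : T ∈ distTriang C) :
    (Triangle.shiftFunctor C 1).obj T ∈ distTriang C :=
  isomorphic_distinguished _ (rot_of_distTriang _ (rot_of_distTriang _
    (rot_of_distTriang _ hT))) _ ((rotateRotateRotateIso C).symm.app T)

lemma isConv_shift (m : ℕ) : ∀ (X : ℕ → C) (d : ∀ i : ℕ, X (i + 1) ⟶ X i) (T : C)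
    (α : T ⟶ (X m)⟦(m : ℤ)⟧) (β : X 0 ⟶ T), IsConv m X d T α β →
    IsConv m (fun i => (X i)⟦(1 : ℤ)⟧) (fun i => (d i)⟦(1 : ℤ)⟧') (T⟦(1 : ℤ)⟧)
      (((-1 : ℤ) ^ m) • (α⟦(1 : ℤ)⟧' ≫ (shiftComm (X m) ((m : ℤ)) (1 : ℤ)).hom))
      (β⟦(1 : ℤ)⟧') := by
  induction m with
  | zero =>
    rintro X d T α β ⟨e, hβ, hα⟩
    refine ⟨(shiftFunctor C (1:ℤ)).mapIso e, ?_, ?_⟩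
    · rw [Functor.mapIso_hom, ← Functor.map_comp, hβ, CategoryTheory.Functor.map_id]
    · dsimp only [Functor.mapIso_hom]
      rw [pow_zero, one_smul, hα, Functor.map_comp, assoc]
      congr 1
      exact helper1 (X 0)
  | succ m ih =>
    rintro X d T α β ⟨T', f₀, g₀, α', β', hdist, hβf, hconv, hα⟩
    refine ⟨T'⟦(1:ℤ)⟧, f₀⟦(1:ℤ)⟧', -(g₀⟦(1:ℤ)⟧' ≫ (shiftFunctorComm C 1 1).hom.app T'),
      ((-1 : ℤ) ^ m) • (α'⟦(1 : ℤ)⟧' ≫ (shiftComm (X (m+1)) ((m : ℤ)) (1 : ℤ)).hom),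
      β'⟦(1:ℤ)⟧', ?_, ?_, ?_, ?_⟩
    · refine isomorphic_distinguished _ (shift1_distinguished _ hdist) _ ?_
      refine Triangle.isoMk _ _ (Iso.refl _) (negIso _) (Iso.refl _) ?_ ?_ ?_
      · dsimp [negIso]; simp [Triangle.shiftFunctor]; erw [Preadditive.comp_neg, comp_id, id_comp]; rfl
      · dsimp [negIso]; simp [Triangle.shiftFunctor]; erw [comp_id, Preadditive.neg_comp, id_comp, neg_neg]; rfl
      · dsimp [negIso]; simp [Triangle.shiftFunctor]; erw [CategoryTheory.Functor.map_id, comp_id, id_comp]; rfl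
    · rw [← Functor.map_comp, hβf]
    · exact ih _ _ _ _ _ hconv
    · have h2 := helper2 (m : ℤ) (((m+1 : ℕ)) : ℤ) (by push_cast; ring) (X (m+1))
      rw [hα]
      simp only [Functor.map_comp, Functor.map_zsmul, Preadditive.comp_zsmul,
        Preadditive.zsmul_comp, assoc, Preadditive.neg_comp, Preadditive.comp_neg, smul_neg, neg_smul,
        shiftFunctorComm_eq_refl, Iso.refl_hom, NatTrans.id_app, id_comp, pow_succ]
      simp only [comp_id, Iso.app_hom, Functor.map_comp, assoc, Preadditive.neg_comp, smul_neg,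
        neg_smul, neg_neg, mul_neg, mul_one]
      rw [h2]
      simp only [Functor.comp_obj, comp_id, id_comp, Preadditive.neg_comp, smul_neg]

/-- Lemma 2.2 of the paper: if `(T, α, β)` is a convolution of the complex
`X n → … → X 0`, then `(T[1], (-1)ⁿ α', β[1])` is a convolution of the shifted
complex `X n[1] → … → X 0[1]`, where `α'` is induced by `α` under the canonical
identification `(X n [n])[1] ≅ (X n [1])[n]`. -/
theorem stmt_9 (n : ℕ) (hn : 1 ≤ n) (X : ℕ → C) (d : ∀ i : ℕ, X (i + 1) ⟶ X i)
    (hd : ∀ i, i + 2 ≤ n → d (i + 1) ≫ d i = 0)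
    (T : C) (α : T ⟶ (X n)⟦(n : ℤ)⟧) (β : X 0 ⟶ T)
    (h : IsConv n X d T α β) :
    IsConv n (fun i => (X i)⟦(1 : ℤ)⟧) (fun i => (d i)⟦(1 : ℤ)⟧') (T⟦(1 : ℤ)⟧)
      (((-1 : ℤ) ^ n) • (α⟦(1 : ℤ)⟧' ≫ (shiftComm (X n) ((n : ℤ)) (1 : ℤ)).hom))
      (β⟦(1 : ℤ)⟧') :=
  isConv_shift n X d T α β h

end
end

section
/- Let k be a field, and let 0 → V_1 →^{ι} V →^{π} L → 0 be a short exact sequence of finite-dimensional k-vector spaces with dim L = 1 and dim V_1 = r. Let φ : V → W be a linear map with dim W = r, and let k_φ : det(V) ⊗ det(W)^* → V be the linear map obtained by tensoring the r-th exterior power map Λ^r(φ^*) : det(W^*) → Λ^r(V^*) with det(V) and applying the canonical contraction isomorphism det(V) ⊗ Λ^r(V^*) ≅ V. Then φ ∘ k_φ = 0, and π ∘ k_φ = 0 if and only if the composition φ ∘ ι : V_1 → W is not an isomorphism (equivalently, the induced map det(V_1) → det(W) is zero). -/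
open Function

/-- The exterior product `v₀ ∧ … ∧ v_{n-1}`, as an element of the `n`-th exterior
power `⋀[R]^n M` (viewed as a submodule of the exterior algebra). -/
noncomputable def wedge (R : Type*) [CommRing R] {M : Type*} [AddCommGroup M] [Module R M]
    (n : ℕ) (v : Fin n → M) : ⋀[R]^n M :=
  ⟨ExteriorAlgebra.ιMulti R n v, ExteriorAlgebra.ιMulti_range R n ⟨v, rfl⟩⟩

section aux

variable {k : Type*} [Field k] {M : Type*} [AddCommGroup M] [Module k M]

/-- `wedge` as an alternating map. -/
noncomputable def wedgeAlt (k : Type*) [Field k] (M : Type*) [AddCommGroup M] [Module k M]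
    (n : ℕ) : M [⋀^Fin n]→ₗ[k] ⋀[k]^n M :=
  (ExteriorAlgebra.ιMulti k n).codRestrict (⋀[k]^n M)
    (fun v => ExteriorAlgebra.ιMulti_range k n ⟨v, rfl⟩)

lemma wedgeAlt_apply (n : ℕ) (v : Fin n → M) : wedgeAlt k M n v = wedge k n v := rfl

/-- A linear map vanishing on all wedges vanishes. -/
lemma ext_wedge {n : ℕ} {N : Type*} [AddCommGroup N] [Module k N]
    (q : ⋀[k]^n M →ₗ[k] N) (h : ∀ v : Fin n → M, q (wedge k n v) = 0) :
    ∀ ω : ⋀[k]^n M, q ω = 0 := by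
  have key : ∀ y, y ∈ Submodule.span k (Set.range (ExteriorAlgebra.ιMulti k n (M := M))) →
      ∀ h2 : y ∈ ⋀[k]^n M, q ⟨y, h2⟩ = 0 := by
    intro y hy
    induction hy using Submodule.span_induction with
    | mem z hz =>
      intro h2
      obtain ⟨v, rfl⟩ := hz
      exact h v
    | zero =>
      intro h2
      rw [show (⟨0, h2⟩ : ⋀[k]^n M) = 0 from Subtype.ext rfl, map_zero]
    | add y z hy hz hy' hz' =>
      intro h2
      have my : y ∈ ⋀[k]^n M := by rw [← ExteriorAlgebra.ιMulti_span_fixedDegree]; exact hy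
      have mz : z ∈ ⋀[k]^n M := by rw [← ExteriorAlgebra.ιMulti_span_fixedDegree]; exact hz
      rw [show (⟨y + z, h2⟩ : ⋀[k]^n M) = ⟨y, my⟩ + ⟨z, mz⟩ from Subtype.ext rfl, map_add,
        hy' my, hz' mz, add_zero]
    | smul a y hy hy' =>
      intro h2
      have my : y ∈ ⋀[k]^n M := by rw [← ExteriorAlgebra.ιMulti_span_fixedDegree]; exact hy
      rw [show (⟨a • y, h2⟩ : ⋀[k]^n M) = a • ⟨y, my⟩ from Subtype.ext rfl, map_smul,
        hy' my, smul_zero]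
  rintro ⟨x, hx⟩
  exact key x (by rw [ExteriorAlgebra.ιMulti_span_fixedDegree]; exact hx) hx

/-- Top wedge in terms of a basis. -/
lemma wedge_eq_det_smul {n : ℕ} (e : Module.Basis (Fin n) k M) (v : Fin n → M) :
    wedge k n v = e.det v • wedge k n e := by
  classical
  have hFG : wedgeAlt k M n =
      (LinearMap.toSpanSingleton k _ (wedge k n e)).compAlternatingMap e.det := by
    refine Module.Basis.ext_alternating e (fun w hw => ?_)
    have hb : Function.Bijective w := (Finite.injective_iff_bijective).mp hw
    set σ : Equiv.Perm (Fin n) := Equiv.ofBijective w hb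
    have h1 : (fun i => e (w i)) = ⇑e ∘ ⇑σ := rfl
    rw [h1, AlternatingMap.map_perm, LinearMap.compAlternatingMap_apply,
      AlternatingMap.map_perm, Module.Basis.det_self, LinearMap.map_smul_of_tower,
      LinearMap.toSpanSingleton_apply, one_smul, wedgeAlt_apply]
  have := congrArg (fun F => F v) hFG
  simpa [wedgeAlt_apply, LinearMap.toSpanSingleton_apply] using this

end aux

section detlemmas

variable {k : Type*} [Field k] {W : Type*} [AddCommGroup W] [Module k W] [FiniteDimensional k W]

lemma detK {r : ℕ} (hW : Module.finrank k W = r) (b : Module.Basis (Fin r) k W)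
    (w : Fin (r+1) → W) (η : Module.Dual k W) :
    ∑ i : Fin (r+1), (-1:k)^(i:ℕ) * b.det (w ∘ i.succAbove) * η (w i) = 0 := by
  classical
  set ℓ : Fin (r+1) → (W →ₗ[k] k) := Fin.cases η (fun i' => b.coord i') with hℓ
  set M : Matrix (Fin (r+1)) (Fin (r+1)) k := Matrix.of fun i j => ℓ i (w j) with hMdef
  have hdep : ¬ LinearIndependent k w := by
    intro h
    have := h.fintype_card_le_finrank
    simp [hW] at this
  obtain ⟨c, hc, i0, hi0⟩ := Fintype.not_linearIndependent_iff.mp hdep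
  have hdet : M.det = 0 := by
    rw [← Matrix.exists_mulVec_eq_zero_iff]
    refine ⟨c, fun hcc => hi0 (congrFun hcc i0), ?_⟩
    ext i
    have : (M.mulVec c) i = ℓ i (∑ j, c j • w j) := by
      simp [Matrix.mulVec, dotProduct, hMdef, map_sum, map_smul, smul_eq_mul, mul_comm]
    rw [this, hc, map_zero]; rfl
  rw [Matrix.det_succ_row_zero] at hdet
  have hsub : ∀ j : Fin (r+1),
      (M.submatrix Fin.succ j.succAbove).det = b.det (w ∘ j.succAbove) := by
    intro j
    rw [Module.Basis.det_apply]
    congr 1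
  calc ∑ i : Fin (r+1), (-1:k)^(i:ℕ) * b.det (w ∘ i.succAbove) * η (w i)
      = ∑ i : Fin (r+1), (-1:k)^(i:ℕ) * M 0 i * (M.submatrix Fin.succ i.succAbove).det := by
        refine Finset.sum_congr rfl (fun i _ => ?_)
        rw [hsub i]
        have : M 0 i = η (w i) := by simp [hMdef, hℓ]
        rw [this]; ring
    _ = 0 := hdet

lemma lemA {r : ℕ} (hW : Module.finrank k W = r)
    (ζ : Module.Dual k (⋀[k]^r W)) (w : Fin (r+1) → W) :
    ∑ i : Fin (r+1), ((-1:k)^(i:ℕ) * ζ (wedge k r (w ∘ i.succAbove))) • w i = 0 := by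
  classical
  set b : Module.Basis (Fin r) k W := Module.finBasisOfFinrankEq k W hW
  rw [← Module.forall_dual_apply_eq_zero_iff k]
  intro η
  rw [map_sum]
  set g : W [⋀^Fin r]→ₗ[k] k := ζ.compAlternatingMap (wedgeAlt k W r) with hg
  have hgw : ∀ v : Fin r → W, ζ (wedge k r v) = g v := fun v => rfl
  have hsmul := g.eq_smul_basis_det b
  calc ∑ i : Fin (r+1), η (((-1:k)^(i:ℕ) * ζ (wedge k r (w ∘ i.succAbove))) • w i)
      = ∑ i : Fin (r+1), g b • ((-1:k)^(i:ℕ) * b.det (w ∘ i.succAbove) * η (w i)) := by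
        refine Finset.sum_congr rfl (fun i _ => ?_)
        rw [map_smul, hgw, hsmul]
        simp [smul_eq_mul, Module.Basis.det_self]
        ring
    _ = g b • ∑ i : Fin (r+1), (-1:k)^(i:ℕ) * b.det (w ∘ i.succAbove) * η (w i) := by
        rw [Finset.smul_sum]
    _ = 0 := by rw [detK hW b w η, smul_zero]

end detlemmas

/-- Fiberwise content of Lemma 3.2 of the paper.  Given a short exact sequence
`0 → V₁ → V → L → 0` with `dim L = 1`, `dim V₁ = r`, and a linear map `φ : V → W`
with `dim W = r`, let `k_φ : det V ⊗ det(W)* → V` be the canonical contraction map;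
it is characterized on decomposable elements by
`k_φ((v₀ ∧ … ∧ v_r) ⊗ ζ) = ∑ᵢ (-1)ⁱ ζ(φv₀ ∧ … ∧ φv̂ᵢ ∧ … ∧ φv_r) • vᵢ`.
Then `φ ∘ k_φ = 0`, and `π ∘ k_φ = 0` iff `φ ∘ ι : V₁ → W` is not an isomorphism. -/
theorem stmt_14 (k : Type*) [Field k]
    (V V₁ W L : Type*)
    [AddCommGroup V] [Module k V] [FiniteDimensional k V]
    [AddCommGroup V₁] [Module k V₁] [FiniteDimensional k V₁]
    [AddCommGroup W] [Module k W] [FiniteDimensional k W]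
    [AddCommGroup L] [Module k L] [FiniteDimensional k L]
    (r : ℕ)
    (ι : V₁ →ₗ[k] V) (π : V →ₗ[k] L)
    (hι : Injective ι) (hπ : Surjective π)
    (hexact : LinearMap.range ι = LinearMap.ker π)
    (hL : Module.finrank k L = 1) (hV₁ : Module.finrank k V₁ = r)
    (hW : Module.finrank k W = r)
    (φ : V →ₗ[k] W)
    (kφ : ⋀[k]^(r+1) V →ₗ[k] Module.Dual k (⋀[k]^r W) →ₗ[k] V)
    (hkφ : ∀ (v : Fin (r+1) → V) (ζ : Module.Dual k (⋀[k]^r W)),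
      kφ (wedge k (r+1) v) ζ =
        ∑ i : Fin (r+1),
          ((-1 : k) ^ (i : ℕ) * ζ (wedge k r (fun j => φ (v (i.succAbove j))))) • v i) :
    (∀ (ω : ⋀[k]^(r+1) V) (ζ : Module.Dual k (⋀[k]^r W)), φ (kφ ω ζ) = 0) ∧
    ((∀ (ω : ⋀[k]^(r+1) V) (ζ : Module.Dual k (⋀[k]^r W)), π (kφ ω ζ) = 0) ↔
      ¬ Function.Bijective (φ.comp ι)) := by
  classical
  -- dimension of V
  have hVdim : Module.finrank k V = r + 1 := by
    have h1 := LinearMap.finrank_range_add_finrank_ker π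
    rw [LinearMap.range_eq_top.mpr hπ, finrank_top, hL, ← hexact,
      LinearMap.finrank_range_of_inj hι, hV₁] at h1
    omega
  -- bases and distinguished elements
  set u : Module.Basis (Fin r) k V₁ := Module.finBasisOfFinrankEq k V₁ hV₁ with hu
  set bL : Module.Basis (Fin 1) k L := Module.finBasisOfFinrankEq k L hL with hbL
  set ℓ0 : L := bL 0 with hℓ0def
  have hℓ0 : ℓ0 ≠ 0 := bL.ne_zero 0
  obtain ⟨e₀, he₀⟩ := hπ ℓ0
  set f : Fin (r+1) → V := Fin.cons e₀ (fun i => ι (u i)) with hf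
  have hker : ∀ x : V₁, π (ι x) = 0 := fun x => by
    have hx : ι x ∈ LinearMap.ker π := hexact ▸ LinearMap.mem_range_self ι x
    exact hx
  have hli : LinearIndependent k f := by
    rw [Fintype.linearIndependent_iff]
    intro g hg
    have hsum : ∑ i, g i • f i = g 0 • e₀ + ∑ i : Fin r, g i.succ • ι (u i) := by
      rw [Fin.sum_univ_succ]
      simp [hf]
    have hπ0 : π (∑ i, g i • f i) = g 0 • ℓ0 := by
      rw [hsum, map_add, map_smul, he₀, map_sum]
      simp [map_smul, hker]
    rw [hg, map_zero] at hπ0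
    have hg0 : g 0 = 0 := (smul_eq_zero.mp hπ0.symm).resolve_right hℓ0
    have h2 : ι (∑ i : Fin r, g i.succ • u i) = ι 0 := by
      rw [map_zero, map_sum]
      simp only [map_smul]
      have := hg
      rw [hsum, hg0, zero_smul, zero_add] at this
      exact this
    have h3 := hι h2
    have h4 := Fintype.linearIndependent_iff.mp u.linearIndependent _ h3
    intro i
    induction i using Fin.cases with
    | zero => exact hg0
    | succ i => exact h4 i
  set e : Module.Basis (Fin (r+1)) k V := basisOfLinearIndependentOfCardEqFinrank hli
    (by simp [hVdim]) with he
  have hecoe : ⇑e = f := coe_basisOfLinearIndependentOfCardEqFinrank hli _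
  set y : Fin r → W := fun j => φ (ι (u j)) with hy
  -- the key computation at the basis wedge
  have key : ∀ ζ : Module.Dual k (⋀[k]^r W),
      π (kφ (wedge k (r+1) ⇑e) ζ) = ζ (wedge k r y) • ℓ0 := by
    intro ζ
    rw [hkφ, map_sum]
    simp only [map_smul]
    rw [Fin.sum_univ_succ]
    have hes : ∀ i : Fin r, π (e i.succ) = 0 := fun i => by
      rw [hecoe, hf]
      simp only [Fin.cons_succ]
      exact hker _
    have h0 : π (e 0) = ℓ0 := by
      rw [hecoe, hf]
      simp only [Fin.cons_zero]
      exact he₀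
    have hfam : (fun j => φ (e ((0 : Fin (r+1)).succAbove j))) = y := by
      funext j
      rw [hecoe, hf]
      simp [Fin.zero_succAbove, Fin.cons_succ, hy]
    rw [h0]
    simp only [hes, smul_zero, Finset.sum_const_zero, add_zero]
    rw [hfam]
    simp
  -- bijectivity equivalences
  have hy_of_bij : Function.Bijective (φ.comp ι) → LinearIndependent k y := by
    intro hb
    have : y = ⇑(φ.comp ι) ∘ ⇑u := rfl
    rw [this]
    exact u.linearIndependent.map' (φ.comp ι) (LinearMap.ker_eq_bot.mpr hb.injective)
  have hbij_of_y : LinearIndependent k y → Function.Bijective (φ.comp ι) := by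
    intro hyli
    have hsur : Surjective (φ.comp ι) := by
      rw [← LinearMap.range_eq_top]
      have hsp := hyli.span_eq_top_of_card_eq_finrank' (by simp [hW])
      rw [← top_le_iff, ← hsp, Submodule.span_le]
      rintro w ⟨j, rfl⟩
      exact ⟨u j, rfl⟩
    exact ⟨(LinearMap.injective_iff_surjective_of_finrank_eq_finrank
      (by rw [hV₁, hW])).mpr hsur, hsur⟩
  -- part 1
  have part1 : ∀ (ω : ⋀[k]^(r+1) V) (ζ : Module.Dual k (⋀[k]^r W)), φ (kφ ω ζ) = 0 := by
    intro ω ζ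
    have := ext_wedge (φ ∘ₗ (kφ.flip ζ)) (fun v => by
      rw [LinearMap.comp_apply, LinearMap.flip_apply, hkφ, map_sum]
      simp only [map_smul]
      exact lemA hW ζ (φ ∘ v)) ω
    simpa using this
  refine ⟨part1, ?_, ?_⟩
  · -- forward: π ∘ kφ = 0 → not bijective
    intro H hb
    have hyli := hy_of_bij hb
    set b' : Module.Basis (Fin r) k W := Module.Basis.mk hyli
      (hyli.span_eq_top_of_card_eq_finrank' (by simp [hW])).ge with hb'
    set fam : ∀ i, W [⋀^Fin i]→ₗ[k] k :=
      Function.update (fun _ => 0) r b'.det with hfam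
    set ξ : Module.Dual k (⋀[k]^r W) :=
      (ExteriorAlgebra.liftAlternating fam) ∘ₗ (Submodule.subtype _) with hξ
    have hξy : ξ (wedge k r y) = 1 := by
      rw [hξ]
      simp only [LinearMap.comp_apply, Submodule.subtype_apply]
      show ExteriorAlgebra.liftAlternating fam (ExteriorAlgebra.ιMulti k r y) = 1
      rw [ExteriorAlgebra.liftAlternating_apply_ιMulti]
      have h1 : fam r = b'.det := by rw [hfam]; simp
      rw [h1]
      have h2 : y = ⇑b' := by rw [hb', Module.Basis.coe_mk]
      rw [h2, Module.Basis.det_self]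
    have := key ξ
    rw [H _ ξ, hξy, one_smul] at this
    exact hℓ0 this.symm
  · -- backward: not bijective → π ∘ kφ = 0
    intro hnb ω ζ
    have hny : ¬ LinearIndependent k y := fun h => hnb (hbij_of_y h)
    have hy0 : wedge k r y = 0 := by
      rw [← wedgeAlt_apply]
      exact (wedgeAlt k W r).map_linearDependent y hny
    have h0 : π (kφ (wedge k (r+1) ⇑e) ζ) = 0 := by
      rw [key ζ, hy0, map_zero, zero_smul]
    have := ext_wedge (π ∘ₗ (kφ.flip ζ)) (fun v => by
      rw [LinearMap.comp_apply, LinearMap.flip_apply, wedge_eq_det_smul e v, map_smul,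
        LinearMap.smul_apply, map_smul, h0, smul_zero]) ω
    simpa using this
end
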